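/- Let $M$ be a rank-$k$ matrix with SVD $M = \sum_{j=1}^k \sigma_j u_j v_j^T$ ($\sigma_1 \geq \dots \geq \sigma_k > 0$), let $E$ be any matrix of the same dimensions, and let $\hat M = M + E$ with right singular vectors $\hat v_1,\dots$. For $1 \leq a \leq b \leq k$, write $V_{a:b} = (v_a,\dots,v_b)$, $\hat V_{a:b} = (\hat v_a,\dots,\hat v_b)$, $V = (v_1,\dots,v_k)$, and $g_{a:b} = \min\{\sigma_{a-1} - \sigma_a, \sigma_b - \sigma_{b+1}\}$ (with $\sigma_0 = +\infty$, $\sigma_{k+1} = 0$). Define $S_{a:b} = (I - VV^T)(\hat V_{a:b}\hat V_{a:b}^T - V_{a:b}V_{a:b}^T)V_{a:b} - \sum_{j=a}^b \frac{1}{\sigma_j}(I - VV^T)E^T u_j v_j^T V_{a:b}$. Then $\|S_{a:b}\|_{op} \leq \left(\frac{32(\sigma_a - \sigma_b)}{\pi g_{a:b}} + 16\right) \frac{\|E\|_{op}^2}{g_{a:b}^2}$. -/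

import Mathlib

open Matrix Finset

noncomputable def vnorm {ι : Type*} [Fintype ι] (v : ι → ℝ) : ℝ :=
  Real.sqrt (∑ i, v i ^ 2)

noncomputable def opNorm {m n : Type*} [Fintype m] [Fintype n]
    (A : Matrix m n ℝ) : ℝ :=
  ⨆ v : {v : n → ℝ // vnorm v ≤ 1}, vnorm (A.mulVec v)

namespace SPRB

variable {m n l : Type*} [Fintype m] [Fintype n] [Fintype l]

lemma vnorm_nonneg (v : n → ℝ) : 0 ≤ vnorm v := Real.sqrt_nonneg _

lemma vnorm_sq (v : n → ℝ) : vnorm v ^ 2 = ∑ i, v i ^ 2 :=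
  Real.sq_sqrt (Finset.sum_nonneg fun i _ => sq_nonneg _)

lemma vnorm_zero : vnorm (0 : n → ℝ) = 0 := by simp [vnorm]

lemma vnorm_eq_zero {v : n → ℝ} (h : vnorm v = 0) : v = 0 := by
  have h2 : ∑ i, v i ^ 2 = 0 := by rw [← vnorm_sq v, h]; ring
  funext i
  have := (Finset.sum_eq_zero_iff_of_nonneg (fun i _ => sq_nonneg (v i))).1 h2 i (mem_univ i)
  exact pow_eq_zero_iff (two_ne_zero) |>.1 this

lemma vnorm_smul (c : ℝ) (v : n → ℝ) : vnorm (c • v) = |c| * vnorm v := by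
  simp only [vnorm, Pi.smul_apply, smul_eq_mul, mul_pow]
  rw [← Finset.mul_sum, Real.sqrt_mul (sq_nonneg c), Real.sqrt_sq_eq_abs]

lemma vnorm_neg (v : n → ℝ) : vnorm (-v) = vnorm v := by
  simp [vnorm, neg_sq]

lemma le_of_sq_le_sq {a b : ℝ} (ha : 0 ≤ a) (hb : 0 ≤ b) (h : a ^ 2 ≤ b ^ 2) : a ≤ b := by
  nlinarith

lemma dot_le_vnorm_mul_vnorm (v w : n → ℝ) : v ⬝ᵥ w ≤ vnorm v * vnorm w := by
  have h := Finset.sum_mul_sq_le_sq_mul_sq Finset.univ v w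
  have hb : 0 ≤ vnorm v * vnorm w := mul_nonneg (vnorm_nonneg v) (vnorm_nonneg w)
  have h2 : (v ⬝ᵥ w) ^ 2 ≤ (vnorm v * vnorm w) ^ 2 := by
    rw [mul_pow, vnorm_sq, vnorm_sq]; exact h
  calc v ⬝ᵥ w ≤ |v ⬝ᵥ w| := le_abs_self _
    _ = Real.sqrt ((v ⬝ᵥ w) ^ 2) := (Real.sqrt_sq_eq_abs _).symm
    _ ≤ Real.sqrt ((vnorm v * vnorm w) ^ 2) := Real.sqrt_le_sqrt h2
    _ = vnorm v * vnorm w := Real.sqrt_sq hb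

lemma vnorm_dot (v : n → ℝ) : vnorm v ^ 2 = v ⬝ᵥ v := by
  rw [vnorm_sq]; simp [dotProduct, sq]

lemma vnorm_add_le (x y : n → ℝ) : vnorm (x + y) ≤ vnorm x + vnorm y := by
  have hb : 0 ≤ vnorm x + vnorm y := add_nonneg (vnorm_nonneg x) (vnorm_nonneg y)
  have hd := dot_le_vnorm_mul_vnorm x y
  apply le_of_sq_le_sq (vnorm_nonneg _) hb
  have e1 : vnorm (x + y) ^ 2 = vnorm x ^ 2 + 2 * (x ⬝ᵥ y) + vnorm y ^ 2 := by
    rw [vnorm_dot, vnorm_dot, vnorm_dot]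
    simp only [dotProduct, Pi.add_apply]
    rw [Finset.mul_sum, ← Finset.sum_add_distrib, ← Finset.sum_add_distrib]
    apply Finset.sum_congr rfl; intro i _; ring
  nlinarith

/-- orthonormal family indexed by a finset of naturals -/
def aON (s : Finset ℕ) (w : ℕ → n → ℝ) : Prop :=
  ∀ i ∈ s, ∀ j ∈ s, w i ⬝ᵥ w j = if i = j then (1 : ℝ) else 0

/-- sum of rank-one matrices -/
def aOS (s : Finset ℕ) (c : ℕ → ℝ) (w : ℕ → m → ℝ) (x : ℕ → n → ℝ) : Matrix m n ℝ :=
  ∑ i ∈ s, c i • Matrix.vecMulVec (w i) (x i)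

lemma dotProduct_sum' (y : n → ℝ) (s : Finset ℕ) (f : ℕ → n → ℝ) :
    y ⬝ᵥ (∑ i ∈ s, f i) = ∑ i ∈ s, y ⬝ᵥ f i := by
  simp only [dotProduct, Finset.sum_apply]
  rw [Finset.sum_comm]
  apply Finset.sum_congr rfl; intro t _
  rw [Finset.mul_sum]

lemma sum_dotProduct' (y : n → ℝ) (s : Finset ℕ) (f : ℕ → n → ℝ) :
    (∑ i ∈ s, f i) ⬝ᵥ y = ∑ i ∈ s, f i ⬝ᵥ y := by
  rw [dotProduct_comm, dotProduct_sum']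
  apply Finset.sum_congr rfl; intro i _; rw [dotProduct_comm]

lemma aOS_mulVec (s : Finset ℕ) (c : ℕ → ℝ) (w : ℕ → m → ℝ) (x : ℕ → n → ℝ) (y : n → ℝ) :
    (aOS s c w x).mulVec y = ∑ i ∈ s, (c i * (x i ⬝ᵥ y)) • w i := by
  funext j
  simp only [aOS, Matrix.mulVec, dotProduct, Matrix.sum_apply, Matrix.smul_apply,
    Matrix.vecMulVec_apply, smul_eq_mul, Finset.sum_apply, Pi.smul_apply]
  calc ∑ t, (∑ i ∈ s, c i * (w i j * x i t)) * y t
      = ∑ t, ∑ i ∈ s, c i * (w i j * x i t) * y t := by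
        apply Finset.sum_congr rfl; intro t _; rw [Finset.sum_mul]
    _ = ∑ i ∈ s, ∑ t, c i * (w i j * x i t) * y t := Finset.sum_comm
    _ = ∑ i ∈ s, c i * (∑ t, x i t * y t) * w i j := by
        apply Finset.sum_congr rfl; intro i _
        simp only [Finset.mul_sum, Finset.sum_mul]
        apply Finset.sum_congr rfl; intro t _; ring

lemma vnorm_sq_sum_smul (s : Finset ℕ) (w : ℕ → n → ℝ) (hw : aON s w) (d : ℕ → ℝ) :
    vnorm (∑ i ∈ s, d i • w i) ^ 2 = ∑ i ∈ s, d i ^ 2 := by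
  rw [vnorm_dot]
  rw [sum_dotProduct']
  calc ∑ i ∈ s, (d i • w i) ⬝ᵥ (∑ j ∈ s, d j • w j)
      = ∑ i ∈ s, ∑ j ∈ s, d i * d j * (w i ⬝ᵥ w j) := by
        apply Finset.sum_congr rfl; intro i _
        rw [dotProduct_sum']
        apply Finset.sum_congr rfl; intro j _
        rw [smul_dotProduct, dotProduct_smul]
        simp [mul_assoc]
    _ = ∑ i ∈ s, d i ^ 2 := by
        apply Finset.sum_congr rfl; intro i hi
        calc ∑ j ∈ s, d i * d j * (w i ⬝ᵥ w j)
            = ∑ j ∈ s, if i = j then d i ^ 2 else 0 := by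
              apply Finset.sum_congr rfl; intro j hj
              rw [hw i hi j hj]
              split
              · next h => subst h; ring
              · ring
          _ = d i ^ 2 := by rw [Finset.sum_ite_eq s i (fun _ => d i ^ 2)]; simp [hi]

lemma proj_identity (s : Finset ℕ) (x : ℕ → n → ℝ) (hx : aON s x) (y : n → ℝ) :
    vnorm (y - ∑ i ∈ s, (x i ⬝ᵥ y) • x i) ^ 2 = vnorm y ^ 2 - ∑ i ∈ s, (x i ⬝ᵥ y) ^ 2 := by
  have hz := vnorm_sq_sum_smul s x hx (fun i => x i ⬝ᵥ y)
  rw [vnorm_dot, vnorm_dot] at *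
  rw [sub_dotProduct, dotProduct_sub, dotProduct_sub]
  have h1 : y ⬝ᵥ (∑ i ∈ s, (x i ⬝ᵥ y) • x i) = ∑ i ∈ s, (x i ⬝ᵥ y) ^ 2 := by
    rw [dotProduct_sum']
    apply Finset.sum_congr rfl; intro i _
    rw [dotProduct_smul, dotProduct_comm]; simp [sq]
  have h2 : (∑ i ∈ s, (x i ⬝ᵥ y) • x i) ⬝ᵥ y = ∑ i ∈ s, (x i ⬝ᵥ y) ^ 2 := by
    rw [dotProduct_comm]; exact h1
  rw [h1, h2, hz]
  ring

lemma bessel (s : Finset ℕ) (x : ℕ → n → ℝ) (hx : aON s x) (y : n → ℝ) :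
    ∑ i ∈ s, (x i ⬝ᵥ y) ^ 2 ≤ vnorm y ^ 2 := by
  have h := proj_identity s x hx y
  nlinarith [vnorm_nonneg (y - ∑ i ∈ s, (x i ⬝ᵥ y) • x i),
    sq_nonneg (vnorm (y - ∑ i ∈ s, (x i ⬝ᵥ y) • x i))]

instance ballNonempty : Nonempty {v : n → ℝ // vnorm v ≤ 1} :=
  ⟨⟨0, by rw [vnorm_zero]; norm_num⟩⟩

lemma crude_bound (A : Matrix m n ℝ) (y : n → ℝ) :
    vnorm (A.mulVec y) ≤ Real.sqrt (∑ j, ∑ t, A j t ^ 2) * vnorm y := by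
  have hs : (0:ℝ) ≤ ∑ j, ∑ t, A j t ^ 2 :=
    Finset.sum_nonneg fun j _ => Finset.sum_nonneg fun t _ => sq_nonneg _
  have hb : 0 ≤ Real.sqrt (∑ j, ∑ t, A j t ^ 2) * vnorm y :=
    mul_nonneg (Real.sqrt_nonneg _) (vnorm_nonneg _)
  apply le_of_sq_le_sq (vnorm_nonneg _) hb
  rw [mul_pow, Real.sq_sqrt hs, vnorm_sq, vnorm_sq, Finset.sum_mul]
  apply Finset.sum_le_sum; intro j _
  have h := Finset.sum_mul_sq_le_sq_mul_sq Finset.univ (fun t => A j t) y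
  simpa [Matrix.mulVec, dotProduct] using h

lemma opNorm_bdd (A : Matrix m n ℝ) :
    BddAbove (Set.range fun v : {v : n → ℝ // vnorm v ≤ 1} => vnorm (A.mulVec v)) := by
  refine ⟨Real.sqrt (∑ j, ∑ t, A j t ^ 2), ?_⟩
  rintro r ⟨v, rfl⟩
  calc vnorm (A.mulVec v) ≤ Real.sqrt (∑ j, ∑ t, A j t ^ 2) * vnorm (v : n → ℝ) :=
        crude_bound A v
    _ ≤ Real.sqrt (∑ j, ∑ t, A j t ^ 2) * 1 :=
        mul_le_mul_of_nonneg_left v.2 (Real.sqrt_nonneg _)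
    _ = _ := mul_one _

lemma opNorm_le (A : Matrix m n ℝ) {C : ℝ}
    (hC : ∀ y : n → ℝ, vnorm y ≤ 1 → vnorm (A.mulVec y) ≤ C) : opNorm A ≤ C :=
  ciSup_le fun v => hC v v.2

lemma opNorm_nonneg (A : Matrix m n ℝ) : 0 ≤ opNorm A := by
  have h := le_ciSup (opNorm_bdd A) (⟨0, by rw [vnorm_zero]; norm_num⟩ :
    {v : n → ℝ // vnorm v ≤ 1})
  simpa [opNorm, Matrix.mulVec_zero, vnorm_zero] using h

lemma le_opNorm (A : Matrix m n ℝ) (y : n → ℝ) :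
    vnorm (A.mulVec y) ≤ opNorm A * vnorm y := by
  rcases eq_or_ne (vnorm y) 0 with h0 | h0
  · have hy0 : y = 0 := vnorm_eq_zero h0
    subst hy0
    rw [Matrix.mulVec_zero, vnorm_zero, vnorm_zero, mul_zero]
  · have hpos : 0 < vnorm y := lt_of_le_of_ne (vnorm_nonneg y) (Ne.symm h0)
    set c := (vnorm y)⁻¹ with hc
    have hcpos : 0 < c := inv_pos.2 hpos
    have hunit : vnorm (c • y) = 1 := by
      rw [vnorm_smul, abs_of_pos hcpos, hc, inv_mul_cancel₀ h0]
    have h : vnorm (A.mulVec (c • y)) ≤ opNorm A :=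
      le_ciSup (opNorm_bdd A) (⟨c • y, le_of_eq hunit⟩ : {v : n → ℝ // vnorm v ≤ 1})
    rw [Matrix.mulVec_smul, vnorm_smul, abs_of_pos hcpos] at h
    calc vnorm (A.mulVec y) = vnorm y * (c * vnorm (A.mulVec y)) := by
          rw [hc, ← mul_assoc, mul_inv_cancel₀ h0, one_mul]
    _ ≤ vnorm y * opNorm A := by
          apply mul_le_mul_of_nonneg_left h (le_of_lt hpos)
    _ = opNorm A * vnorm y := mul_comm _ _

lemma opNorm_mul_le (A : Matrix m n ℝ) (B : Matrix n l ℝ) :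
    opNorm (A * B) ≤ opNorm A * opNorm B := by
  apply opNorm_le; intro y hy
  rw [← Matrix.mulVec_mulVec]
  calc vnorm (A.mulVec (B.mulVec y)) ≤ opNorm A * vnorm (B.mulVec y) := le_opNorm A _
    _ ≤ opNorm A * (opNorm B * vnorm y) :=
        mul_le_mul_of_nonneg_left (le_opNorm B y) (opNorm_nonneg A)
    _ ≤ opNorm A * (opNorm B * 1) := by
        nlinarith [mul_nonneg (opNorm_nonneg A) (opNorm_nonneg B), hy, vnorm_nonneg y]
    _ = opNorm A * opNorm B := by ring

lemma opNorm_add_le (A B : Matrix m n ℝ) : opNorm (A + B) ≤ opNorm A + opNorm B := by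
  apply opNorm_le; intro y hy
  rw [Matrix.add_mulVec]
  calc vnorm (A.mulVec y + B.mulVec y) ≤ vnorm (A.mulVec y) + vnorm (B.mulVec y) :=
        vnorm_add_le _ _
    _ ≤ opNorm A * vnorm y + opNorm B * vnorm y := add_le_add (le_opNorm A y) (le_opNorm B y)
    _ ≤ opNorm A * 1 + opNorm B * 1 := by
        nlinarith [opNorm_nonneg A, opNorm_nonneg B, hy, vnorm_nonneg y]
    _ = opNorm A + opNorm B := by ring

lemma opNorm_neg (A : Matrix m n ℝ) : opNorm (-A) = opNorm A := by
  unfold opNorm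
  congr 1; funext v
  rw [Matrix.neg_mulVec, vnorm_neg]

lemma opNorm_sub_le (A B : Matrix m n ℝ) : opNorm (A - B) ≤ opNorm A + opNorm B := by
  rw [sub_eq_add_neg]
  calc opNorm (A + -B) ≤ opNorm A + opNorm (-B) := opNorm_add_le A (-B)
    _ = opNorm A + opNorm B := by rw [opNorm_neg]

lemma opNorm_zero : opNorm (0 : Matrix m n ℝ) = 0 :=
  le_antisymm (opNorm_le _ fun y _ => by rw [Matrix.zero_mulVec, vnorm_zero])
    (opNorm_nonneg _)

lemma opNorm_transpose_le (A : Matrix m n ℝ) : opNorm Aᵀ ≤ opNorm A := by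
  apply opNorm_le; intro y hy
  set z := Aᵀ.mulVec y with hz
  rcases eq_or_ne (vnorm z) 0 with h0 | h0
  · rw [h0]; exact opNorm_nonneg A
  have hpos : 0 < vnorm z := lt_of_le_of_ne (vnorm_nonneg z) (Ne.symm h0)
  have key : vnorm z ^ 2 ≤ opNorm A * vnorm z := by
    have e1 : vnorm z ^ 2 = y ⬝ᵥ (A.mulVec z) := by
      rw [vnorm_dot, hz, Matrix.mulVec_transpose]
      rw [Matrix.dotProduct_mulVec]
    calc vnorm z ^ 2 = y ⬝ᵥ (A.mulVec z) := e1
      _ ≤ vnorm y * vnorm (A.mulVec z) := dot_le_vnorm_mul_vnorm _ _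
      _ ≤ 1 * (opNorm A * vnorm z) := by
          apply mul_le_mul hy (le_opNorm A z) (vnorm_nonneg _) (by norm_num)
      _ = opNorm A * vnorm z := one_mul _
  nlinarith [key]

lemma aOS_opNorm_le (s : Finset ℕ) (c : ℕ → ℝ) (w : ℕ → m → ℝ) (x : ℕ → n → ℝ)
    (hw : aON s w) (hx : aON s x) {C : ℝ} (hC : 0 ≤ C) (hc : ∀ i ∈ s, |c i| ≤ C) :
    opNorm (aOS s c w x) ≤ C := by
  apply opNorm_le; intro y hy
  rw [aOS_mulVec]
  have h1 := vnorm_sq_sum_smul s w hw (fun i => c i * (x i ⬝ᵥ y))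
  have h2 : ∑ i ∈ s, (c i * (x i ⬝ᵥ y)) ^ 2 ≤ C ^ 2 * ∑ i ∈ s, (x i ⬝ᵥ y) ^ 2 := by
    rw [Finset.mul_sum]
    apply Finset.sum_le_sum; intro i hi
    rw [mul_pow]
    apply mul_le_mul_of_nonneg_right _ (sq_nonneg _)
    calc c i ^ 2 = |c i| ^ 2 := (sq_abs _).symm
      _ ≤ C ^ 2 := by have := hc i hi; nlinarith [abs_nonneg (c i)]
  have h3 := bessel s x hx y
  have h4 : vnorm y ^ 2 ≤ 1 := by nlinarith [vnorm_nonneg y]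
  apply le_of_sq_le_sq (vnorm_nonneg _) hC
  rw [h1]
  have h5 : (0:ℝ) ≤ ∑ i ∈ s, (x i ⬝ᵥ y) ^ 2 := Finset.sum_nonneg fun i _ => sq_nonneg _
  nlinarith

lemma vecMulVec_mul_vecMulVec (w : m → ℝ) (x y : n → ℝ) (z : l → ℝ) :
    Matrix.vecMulVec w x * Matrix.vecMulVec y z = (x ⬝ᵥ y) • Matrix.vecMulVec w z := by
  ext p q
  simp only [Matrix.mul_apply, Matrix.vecMulVec_apply, Matrix.smul_apply, smul_eq_mul,
    dotProduct]
  rw [Finset.sum_mul]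
  apply Finset.sum_congr rfl; intro t _; ring

lemma aOS_mul_aOS (s t : Finset ℕ) (c d : ℕ → ℝ) (w : ℕ → m → ℝ) (x y : ℕ → n → ℝ)
    (z : ℕ → l → ℝ) :
    aOS s c w x * aOS t d y z
      = ∑ i ∈ s, ∑ j ∈ t, (c i * d j * (x i ⬝ᵥ y j)) • Matrix.vecMulVec (w i) (z j) := by
  unfold aOS
  rw [Matrix.sum_mul]
  apply Finset.sum_congr rfl; intro i _
  rw [Matrix.mul_sum]
  apply Finset.sum_congr rfl; intro j _
  rw [Matrix.smul_mul, Matrix.mul_smul, vecMulVec_mul_vecMulVec, smul_smul, smul_smul]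

lemma aOS_mul_collapse {s t : Finset ℕ} {c d : ℕ → ℝ} {w : ℕ → m → ℝ} {x y : ℕ → n → ℝ}
    {z : ℕ → l → ℝ}
    (hst : ∀ i ∈ s, ∀ j ∈ t, x i ⬝ᵥ y j = if i = j then (1 : ℝ) else 0) :
    aOS s c w x * aOS t d y z = aOS (s ∩ t) (fun i => c i * d i) w z := by
  rw [aOS_mul_aOS]
  have step : ∀ i ∈ s, (∑ j ∈ t, (c i * d j * (x i ⬝ᵥ y j)) • Matrix.vecMulVec (w i) (z j))
      = if i ∈ t then (c i * d i) • Matrix.vecMulVec (w i) (z i) else 0 := by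
    intro i hi
    calc ∑ j ∈ t, (c i * d j * (x i ⬝ᵥ y j)) • Matrix.vecMulVec (w i) (z j)
        = ∑ j ∈ t, if i = j then (c i * d i) • Matrix.vecMulVec (w i) (z i) else 0 := by
          apply Finset.sum_congr rfl; intro j hj
          rw [hst i hi j hj]
          split
          · next h => subst h; rw [mul_one]
          · rw [mul_zero, zero_smul]
      _ = if i ∈ t then (c i * d i) • Matrix.vecMulVec (w i) (z i) else 0 :=
          Finset.sum_ite_eq t i _
  rw [Finset.sum_congr rfl step, Finset.sum_ite_mem]
  rfl

lemma aOS_transpose (s : Finset ℕ) (c : ℕ → ℝ) (w : ℕ → m → ℝ) (x : ℕ → n → ℝ) :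
    (aOS s c w x)ᵀ = aOS s c x w := by
  ext p q
  simp only [aOS, Matrix.transpose_apply, Matrix.sum_apply, Matrix.smul_apply,
    Matrix.vecMulVec_apply, smul_eq_mul]
  apply Finset.sum_congr rfl; intro i _; ring

lemma aOS_empty (c : ℕ → ℝ) (w : ℕ → m → ℝ) (x : ℕ → n → ℝ) :
    aOS (∅ : Finset ℕ) c w x = 0 := by
  simp [aOS]

lemma aOS_union {s t : Finset ℕ} (h : Disjoint s t) (c : ℕ → ℝ) (w : ℕ → m → ℝ)
    (x : ℕ → n → ℝ) : aOS (s ∪ t) c w x = aOS s c w x + aOS t c w x :=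
  Finset.sum_union h

lemma aOS_congr {s : Finset ℕ} {c d : ℕ → ℝ} {w : ℕ → m → ℝ} {x : ℕ → n → ℝ}
    (h : ∀ i ∈ s, c i = d i) : aOS s c w x = aOS s d w x := by
  unfold aOS
  apply Finset.sum_congr rfl; intro i hi; rw [h i hi]

lemma collapse_eq {s t : Finset ℕ} {c d e : ℕ → ℝ} {w : ℕ → m → ℝ} {x y : ℕ → n → ℝ}
    {z : ℕ → l → ℝ} (hts : t ⊆ s)
    (hst : ∀ i ∈ s, ∀ j ∈ t, x i ⬝ᵥ y j = if i = j then (1 : ℝ) else 0)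
    (hcd : ∀ i ∈ t, c i * d i = e i) :
    aOS s c w x * aOS t d y z = aOS t e w z := by
  rw [aOS_mul_collapse hst, Finset.inter_eq_right.mpr hts]
  exact aOS_congr hcd

lemma collapse_eq' {s t : Finset ℕ} {c d e : ℕ → ℝ} {w : ℕ → m → ℝ} {x y : ℕ → n → ℝ}
    {z : ℕ → l → ℝ} (hst' : s ⊆ t)
    (hst : ∀ i ∈ s, ∀ j ∈ t, x i ⬝ᵥ y j = if i = j then (1 : ℝ) else 0)
    (hcd : ∀ i ∈ s, c i * d i = e i) :
    aOS s c w x * aOS t d y z = aOS s e w z := by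
  rw [aOS_mul_collapse hst, Finset.inter_eq_left.mpr hst']
  exact aOS_congr hcd

/-- standard basis vectors on a finset-subtype -/
def eb (s : Finset ℕ) : ℕ → {i // i ∈ s} → ℝ := fun i j => if j.1 = i then 1 else 0

lemma eb_on (s : Finset ℕ) : aON s (eb s) := by
  intro i hi j hj
  simp only [dotProduct, eb]
  have h : ∀ t : {x // x ∈ s},
      (if t.1 = i then (1:ℝ) else 0) * (if t.1 = j then 1 else 0)
      = if t.1 = i then (if t.1 = j then (1:ℝ) else 0) else 0 := by
    intro t; split <;> simp
  rw [Finset.sum_congr rfl fun t _ => h t]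
  rw [Finset.sum_coe_sort s (fun t => if t = i then (if t = j then (1:ℝ) else 0) else 0)]
  rw [Finset.sum_ite_eq' s i (fun t => if t = j then (1:ℝ) else 0)]
  simp [hi]

lemma col_eq_aOS {s : Finset ℕ} {w : ℕ → m → ℝ} (W : Matrix m {i // i ∈ s} ℝ)
    (hW : ∀ x i, W x i = w i.1 x) : W = aOS s (fun _ => 1) w (eb s) := by
  ext p q
  simp only [aOS, Matrix.sum_apply, Matrix.smul_apply, Matrix.vecMulVec_apply, eb,
    smul_eq_mul, one_mul]
  rw [hW p q]
  have h : ∀ i ∈ s, w i p * (if q.1 = i then (1:ℝ) else 0)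
      = if q.1 = i then w i p else 0 := by intro i _; split <;> simp
  rw [Finset.sum_congr rfl h, Finset.sum_ite_eq s q.1 (fun i => w i p)]
  simp [q.2]

lemma one_eq_aOS (s : Finset ℕ) [DecidableEq {i // i ∈ s}] :
    (1 : Matrix {i // i ∈ s} {i // i ∈ s} ℝ) = aOS s (fun _ => 1) (eb s) (eb s) := by
  ext p q
  simp only [aOS, Matrix.sum_apply, Matrix.smul_apply, Matrix.vecMulVec_apply, eb,
    smul_eq_mul, one_mul, Matrix.one_apply]
  have h : ∀ i ∈ s, (if p.1 = i then (1:ℝ) else 0) * (if q.1 = i then 1 else 0)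
      = if p.1 = i then (if q.1 = i then (1:ℝ) else 0) else 0 := by
    intro i _; split <;> simp
  rw [Finset.sum_congr rfl h, Finset.sum_ite_eq s p.1 (fun i => if q.1 = i then (1:ℝ) else 0)]
  simp only [p.2, if_true]
  by_cases hpq : p = q
  · subst hpq; simp
  · have : ¬ (q.1 = p.1) := fun h' => hpq (Subtype.ext h'.symm)
    simp [hpq, this]

lemma opNorm_one_sub_proj [DecidableEq n] (s : Finset ℕ) (x : ℕ → n → ℝ) (hx : aON s x) :
    opNorm ((1 : Matrix n n ℝ) - aOS s (fun _ => 1) x x) ≤ 1 := by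
  apply opNorm_le; intro y hy
  have hmv : ((1 : Matrix n n ℝ) - aOS s (fun _ => 1) x x).mulVec y
      = y - ∑ i ∈ s, (x i ⬝ᵥ y) • x i := by
    rw [Matrix.sub_mulVec, Matrix.one_mulVec, aOS_mulVec]
    congr 1
    apply Finset.sum_congr rfl; intro i _; rw [one_mul]
  rw [hmv]
  apply le_of_sq_le_sq (vnorm_nonneg _) (by norm_num)
  rw [proj_identity s x hx y]
  have h2 : (0:ℝ) ≤ ∑ i ∈ s, (x i ⬝ᵥ y) ^ 2 := Finset.sum_nonneg fun i _ => sq_nonneg _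
  have h4 : vnorm y ^ 2 ≤ 1 := by nlinarith [vnorm_nonneg y]
  nlinarith

lemma aON_mono {s t : Finset ℕ} {w : ℕ → n → ℝ} (hst : s ⊆ t) (hw : aON t w) : aON s w :=
  fun i hi j hj => hw i (hst hi) j (hst hj)

lemma pkill [DecidableEq n] {K : Finset ℕ} {v : ℕ → n → ℝ} (hv : aON K v)
    {s : Finset ℕ} (hs : s ⊆ K) (c : ℕ → ℝ) (z : ℕ → l → ℝ) :
    ((1 : Matrix n n ℝ) - aOS K (fun _ => 1) v v) * aOS s c v z = 0 := by
  rw [Matrix.sub_mul, Matrix.one_mul]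
  rw [collapse_eq hs (fun i hi j hj => hv i hi j (hs hj)) (fun i _ => one_mul (c i))]
  exact sub_self _

lemma opNorm_mul_bound {A : Matrix m n ℝ} {B : Matrix n l ℝ} {α β : ℝ}
    (hA : opNorm A ≤ α) (hB : opNorm B ≤ β) : opNorm (A * B) ≤ α * β :=
  le_trans (opNorm_mul_le A B)
    (mul_le_mul hA hB (opNorm_nonneg B) (le_trans (opNorm_nonneg A) hA))

lemma weyl (N₁ N₂ : Matrix m n ℝ) (K₁ K₂ r : ℕ)
    (σ₁ σ₂ : ℕ → ℝ) (u₁ u₂ : ℕ → m → ℝ) (v₁ v₂ : ℕ → n → ℝ)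
    (hr : 1 ≤ r) (hrK : r ≤ K₂)
    (t : ℝ) (ht : 0 ≤ t)
    (hσ₁t : ∀ j ∈ Finset.Icc r K₁, σ₁ j ≤ t)
    (hσ₁nn : ∀ j ∈ Finset.Icc 1 K₁, 0 ≤ σ₁ j)
    (hσ₂nn : ∀ j ∈ Finset.Icc 1 K₂, 0 ≤ σ₂ j)
    (hσ₂mono : ∀ i ∈ Finset.Icc 1 K₂, ∀ j ∈ Finset.Icc 1 K₂, i ≤ j → σ₂ j ≤ σ₂ i)
    (hu₁ : aON (Finset.Icc 1 K₁) u₁) (hv₁ : aON (Finset.Icc 1 K₁) v₁)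
    (hu₂ : aON (Finset.Icc 1 K₂) u₂) (hv₂ : aON (Finset.Icc 1 K₂) v₂)
    (hN₁ : N₁ = aOS (Finset.Icc 1 K₁) σ₁ u₁ v₁)
    (hN₂ : N₂ = aOS (Finset.Icc 1 K₂) σ₂ u₂ v₂) :
    σ₂ r ≤ t + opNorm (N₂ - N₁) := by
  classical
  set s1 : Finset ℕ := Finset.Icc 1 (r-1) with hs1
  set W : Matrix {j // j ∈ s1} {i // i ∈ (Finset.Icc 1 r : Finset ℕ)} ℝ :=
    Matrix.of (fun j i => v₁ j.1 ⬝ᵥ v₂ i.1) with hW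
  have hcard : Fintype.card {j // j ∈ s1}
      < Fintype.card {i // i ∈ (Finset.Icc 1 r : Finset ℕ)} := by
    simp only [Fintype.card_coe, hs1, Nat.card_Icc]; omega
  have hker : LinearMap.ker W.mulVecLin ≠ ⊥ := by
    intro hbot
    have hinj : Function.Injective W.mulVecLin := LinearMap.ker_eq_bot.mp hbot
    have hle := LinearMap.finrank_le_finrank_of_injective hinj
    rw [Module.finrank_fintype_fun_eq_card, Module.finrank_fintype_fun_eq_card] at hle
    omega
  obtain ⟨c, hcmem, hcne⟩ := (Submodule.ne_bot_iff _).1 hker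
  have hc0 : W.mulVec c = 0 := hcmem
  set c' : ℕ → ℝ := fun i => if h : i ∈ Finset.Icc 1 r then c ⟨i, h⟩ else 0 with hc'
  obtain ⟨i₀, hi₀⟩ : ∃ i₀, c i₀ ≠ 0 := Function.ne_iff.1 hcne
  have hc'i₀ : c' i₀.1 ≠ 0 := by rw [hc']; simpa [i₀.2] using hi₀
  set x : n → ℝ := ∑ i ∈ Finset.Icc 1 r, c' i • v₂ i with hx
  have hconstraint : ∀ j ∈ Finset.Icc 1 (r-1), v₁ j ⬝ᵥ x = 0 := by
    intro j hj
    have hj' := congrFun hc0 ⟨j, hj⟩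
    simp only [Matrix.mulVec, Pi.zero_apply] at hj'
    rw [hx, dotProduct_sum']
    rw [← hj']
    rw [dotProduct, ← Finset.sum_coe_sort (Finset.Icc 1 r)
      (fun i => v₁ j ⬝ᵥ (c' i • v₂ i))]
    apply Finset.sum_congr rfl
    rintro ⟨i, hi⟩ _
    simp only [hW, Matrix.of_apply, hc', hi, dif_pos]
    rw [dotProduct_smul]
    simp [mul_comm]
  have hsub : Finset.Icc 1 r ⊆ Finset.Icc 1 K₂ := by
    apply Finset.Icc_subset_Icc le_rfl hrK
  have hxnorm : vnorm x ^ 2 = ∑ i ∈ Finset.Icc 1 r, c' i ^ 2 := by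
    rw [hx]; exact vnorm_sq_sum_smul _ _ (aON_mono hsub hv₂) _
  have hpos : 0 < ∑ i ∈ Finset.Icc 1 r, c' i ^ 2 := by
    have hmem : i₀.1 ∈ Finset.Icc 1 r := i₀.2
    have h1 : c' i₀.1 ^ 2 ≤ ∑ i ∈ Finset.Icc 1 r, c' i ^ 2 :=
      Finset.single_le_sum (fun i _ => sq_nonneg (c' i)) hmem
    have h2 : 0 < c' i₀.1 ^ 2 := by positivity
    linarith
  have hνpos : 0 < vnorm x := by
    have := vnorm_nonneg x
    rcases this.lt_or_eq with h | h
    · exact h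
    · exfalso; rw [← h] at hxnorm; simp at hxnorm; linarith [hxnorm]
  have hdot : ∀ i ∈ Finset.Icc 1 K₂, v₂ i ⬝ᵥ x
      = if i ∈ Finset.Icc 1 r then c' i else 0 := by
    intro i hi
    rw [hx, dotProduct_sum']
    have : ∀ j ∈ Finset.Icc 1 r, v₂ i ⬝ᵥ (c' j • v₂ j)
        = if i = j then c' j else 0 := by
      intro j hj
      rw [dotProduct_smul, hv₂ i hi j (hsub hj)]
      split <;> simp
    rw [Finset.sum_congr rfl this, Finset.sum_ite_eq (Finset.Icc 1 r) i c']
  have hN₂x : vnorm (N₂.mulVec x) ^ 2 = ∑ i ∈ Finset.Icc 1 K₂, (σ₂ i * (v₂ i ⬝ᵥ x)) ^ 2 := by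
    rw [hN₂, aOS_mulVec]
    exact vnorm_sq_sum_smul _ _ hu₂ _
  have hlow : σ₂ r ^ 2 * vnorm x ^ 2 ≤ vnorm (N₂.mulVec x) ^ 2 := by
    rw [hN₂x, hxnorm, Finset.mul_sum]
    have hsplit : ∑ i ∈ Finset.Icc 1 K₂, (σ₂ i * (v₂ i ⬝ᵥ x)) ^ 2
        = ∑ i ∈ Finset.Icc 1 K₂, (if i ∈ Finset.Icc 1 r then (σ₂ i * c' i) ^ 2 else 0) := by
      apply Finset.sum_congr rfl; intro i hi
      rw [hdot i hi]; split <;> simp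
    rw [hsplit, Finset.sum_ite_mem, Finset.inter_eq_right.mpr hsub]
    apply Finset.sum_le_sum
    intro i hi
    have hiK : i ∈ Finset.Icc 1 K₂ := hsub hi
    have hrK' : r ∈ Finset.Icc 1 K₂ := by simp [Finset.mem_Icc]; omega
    have h1 : σ₂ r ≤ σ₂ i := by
      apply hσ₂mono i hiK r hrK'
      exact (Finset.mem_Icc.1 hi).2
    have h2 : 0 ≤ σ₂ r := hσ₂nn r hrK'
    rw [mul_pow]
    have h3 : σ₂ r ^ 2 ≤ σ₂ i ^ 2 := pow_le_pow_left₀ h2 h1 2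
    exact mul_le_mul_of_nonneg_right h3 (sq_nonneg _)
  have hhigh : vnorm (N₁.mulVec x) ^ 2 ≤ t ^ 2 * vnorm x ^ 2 := by
    have hN₁x : vnorm (N₁.mulVec x) ^ 2
        = ∑ i ∈ Finset.Icc 1 K₁, (σ₁ i * (v₁ i ⬝ᵥ x)) ^ 2 := by
      rw [hN₁, aOS_mulVec]
      exact vnorm_sq_sum_smul _ _ hu₁ _
    rw [hN₁x]
    have hterm : ∀ i ∈ Finset.Icc 1 K₁, (σ₁ i * (v₁ i ⬝ᵥ x)) ^ 2
        ≤ t ^ 2 * (v₁ i ⬝ᵥ x) ^ 2 := by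
      intro i hi
      by_cases hir : i ≤ r - 1
      · have : v₁ i ⬝ᵥ x = 0 := by
          apply hconstraint i
          simp only [Finset.mem_Icc] at *
          omega
        rw [this]; simp
      · have hge : i ∈ Finset.Icc r K₁ := by
          simp only [Finset.mem_Icc] at *
          omega
        have h1 := hσ₁t i hge
        have h2 := hσ₁nn i hi
        rw [mul_pow]
        have h3 : σ₁ i ^ 2 ≤ t ^ 2 := pow_le_pow_left₀ h2 h1 2
        exact mul_le_mul_of_nonneg_right h3 (sq_nonneg _)
    calc ∑ i ∈ Finset.Icc 1 K₁, (σ₁ i * (v₁ i ⬝ᵥ x)) ^ 2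
        ≤ ∑ i ∈ Finset.Icc 1 K₁, t ^ 2 * (v₁ i ⬝ᵥ x) ^ 2 := Finset.sum_le_sum hterm
      _ = t ^ 2 * ∑ i ∈ Finset.Icc 1 K₁, (v₁ i ⬝ᵥ x) ^ 2 := (Finset.mul_sum _ _ _).symm
      _ ≤ t ^ 2 * vnorm x ^ 2 := by
          have := bessel (Finset.Icc 1 K₁) v₁ hv₁ x
          nlinarith [sq_nonneg t]
  have hσ₂r : 0 ≤ σ₂ r := hσ₂nn r (by simp [Finset.mem_Icc]; omega)
  have hkey1 : σ₂ r * vnorm x ≤ vnorm (N₂.mulVec x) := by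
    apply le_of_sq_le_sq (mul_nonneg hσ₂r (vnorm_nonneg x)) (vnorm_nonneg _)
    rw [mul_pow]; exact hlow
  have hkey2 : vnorm (N₁.mulVec x) ≤ t * vnorm x := by
    apply le_of_sq_le_sq (vnorm_nonneg _) (mul_nonneg ht (vnorm_nonneg x))
    rw [mul_pow]; exact hhigh
  have hsplit : N₂.mulVec x = N₁.mulVec x + (N₂ - N₁).mulVec x := by
    rw [Matrix.sub_mulVec]; abel
  have hchain : σ₂ r * vnorm x ≤ t * vnorm x + opNorm (N₂ - N₁) * vnorm x := by
    calc σ₂ r * vnorm x ≤ vnorm (N₂.mulVec x) := hkey1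
      _ = vnorm (N₁.mulVec x + (N₂ - N₁).mulVec x) := by rw [← hsplit]
      _ ≤ vnorm (N₁.mulVec x) + vnorm ((N₂ - N₁).mulVec x) := vnorm_add_le _ _
      _ ≤ t * vnorm x + opNorm (N₂ - N₁) * vnorm x :=
          add_le_add hkey2 (le_opNorm _ x)
  nlinarith

lemma oneshot {y c ε s t : ℝ} (hy : 0 ≤ y) (hε : 0 ≤ ε) (hs : 0 ≤ s) (hst : s < t)
    (h : y ≤ s^2 * (t^2)⁻¹ * y + c) (hc : c ≤ s * (ε * (t^2)⁻¹) + 1 * (ε * t⁻¹)) :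
    y ≤ ε / (t - s) := by
  have ht : 0 < t := lt_of_le_of_lt hs hst
  have ht2 : (0:ℝ) < t^2 := by positivity
  rw [le_div_iff₀ (by linarith : (0:ℝ) < t - s)]
  have key : t^2 * y ≤ s^2 * y + (s*ε + ε*t) := by
    have h2 : y ≤ s^2*(t^2)⁻¹*y + (s*(ε*(t^2)⁻¹) + 1*(ε*t⁻¹)) := le_trans h (by linarith)
    have h3 := mul_le_mul_of_nonneg_left h2 (le_of_lt ht2)
    calc t^2*y ≤ t^2*(s^2*(t^2)⁻¹*y + (s*(ε*(t^2)⁻¹) + 1*(ε*t⁻¹))) := h3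
      _ = s^2*y + (s*ε + ε*t) := by field_simp
  nlinarith [key, mul_nonneg hy (le_of_lt (show (0:ℝ) < t + s by linarith))]

lemma mul_sq_inv (x : ℝ) (hx : x ≠ 0) : x * (x^2)⁻¹ = x⁻¹ := by
  rw [sq, mul_inv, ← mul_assoc, mul_inv_cancel₀ hx, one_mul]

section Sylvester

variable {α γ : Type*} [Fintype α] [Fintype γ] [DecidableEq α]

/-- generic "low part" sin-theta bound via one-shot Sylvester argument -/
lemma sylv_low (NP NT : Matrix γ α ℝ) (KP KT aa bb : ℕ)
    (τ σ' : ℕ → ℝ) (φ : ℕ → γ → ℝ) (χ : ℕ → α → ℝ) (ψ : ℕ → γ → ℝ) (ω : ℕ → α → ℝ)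
    (AB : Finset ℕ) (hABeq : AB = Finset.Icc aa bb) (ε s t : ℝ)
    (haa : 1 ≤ aa) (hab : aa ≤ bb) (hbP : bb ≤ KP) (hbT : bb ≤ KT)
    (hφ : aON (Finset.Icc 1 KP) φ) (hχ : aON (Finset.Icc 1 KP) χ)
    (hψ : aON (Finset.Icc 1 KT) ψ) (hω : aON (Finset.Icc 1 KT) ω)
    (hNP : NP = aOS (Finset.Icc 1 KP) τ φ χ) (hNT : NT = aOS (Finset.Icc 1 KT) σ' ψ ω)
    (hD : opNorm (NP - NT) ≤ ε) (hε : 0 ≤ ε)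
    (hs : 0 ≤ s) (hst : s < t)
    (hτtail : ∀ j ∈ Finset.Ioc bb KP, τ j ≤ s)
    (hτnn : ∀ j ∈ Finset.Icc 1 KP, 0 ≤ τ j)
    (hσ't : ∀ j ∈ AB, t ≤ σ' j) :
    opNorm ((1 - aOS (Finset.Icc 1 bb) (fun _ => 1) χ χ)
      * aOS AB (fun _ => 1) ω (eb AB)) ≤ ε / (t - s) := by
  classical
  have htpos : 0 < t := lt_of_le_of_lt hs hst
  have hABK : AB ⊆ Finset.Icc 1 KT := by rw [hABeq]; exact Finset.Icc_subset_Icc haa hbT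
  have h1bKP : Finset.Icc 1 bb ⊆ Finset.Icc 1 KP := Finset.Icc_subset_Icc le_rfl hbP
  have hIocKP : Finset.Ioc bb KP ⊆ Finset.Icc 1 KP := by
    intro j hj; simp only [Finset.mem_Ioc, Finset.mem_Icc] at *; omega
  have hKsplit : Finset.Icc 1 KP = Finset.Icc 1 bb ∪ Finset.Ioc bb KP := by
    ext j; simp only [Finset.mem_Icc, Finset.mem_union, Finset.mem_Ioc]; omega
  have hdisj : Disjoint (Finset.Icc 1 bb) (Finset.Ioc bb KP) := by
    rw [Finset.disjoint_left]; intro j h1 h2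
    simp only [Finset.mem_Icc, Finset.mem_Ioc] at *; omega
  have hσ'pos : ∀ j ∈ AB, 0 < σ' j := fun j hj => lt_of_lt_of_le htpos (hσ't j hj)
  have hebON := eb_on AB
  -- named matrices
  set PH := (1 : Matrix α α ℝ) - aOS (Finset.Icc 1 bb) (fun _ => 1) χ χ with hPH
  set Wm := aOS AB (fun _ => 1) ω (eb AB) with hWm
  set Λ := aOS AB (fun j => σ' j ^ 2) (eb AB) (eb AB) with hΛ
  set ΛI := aOS AB (fun j => (σ' j ^ 2)⁻¹) (eb AB) (eb AB) with hΛI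
  set GH := aOS (Finset.Ioc bb KP) (fun j => τ j ^ 2) χ χ with hGH
  set Dm := NP - NT with hDm
  -- Gram identities
  have hGP : NPᵀ * NP = aOS (Finset.Icc 1 KP) (fun j => τ j ^ 2) χ χ := by
    rw [hNP, aOS_transpose]
    exact collapse_eq (subset_refl _) hφ (fun i _ => (sq (τ i)).symm)
  have hGTW : (NTᵀ * NT) * Wm = Wm * Λ := by
    have e1 : NTᵀ * NT = aOS (Finset.Icc 1 KT) (fun j => σ' j ^ 2) ω ω := by
      rw [hNT, aOS_transpose]
      exact collapse_eq (subset_refl _) hψ (fun i _ => (sq (σ' i)).symm)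
    rw [e1, hWm, hΛ]
    rw [collapse_eq hABK (fun i hi j hj => hω i hi j (hABK hj)) (fun i _ => mul_one _)]
    rw [collapse_eq' (subset_refl _) (fun i hi j hj => hebON i hi j hj)
      (fun i _ => one_mul _)]
  have hPHGP : PH * (NPᵀ * NP) = GH := by
    rw [hPH, hGP, Matrix.sub_mul, Matrix.one_mul]
    rw [collapse_eq' h1bKP (fun i hi j hj => hχ i (h1bKP hi) j hj) (fun i _ => one_mul _)]
    rw [hKsplit, aOS_union hdisj, hGH]
    abel
  have hGHPH : GH * PH = GH := by
    rw [hPH, Matrix.mul_sub, Matrix.mul_one]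
    have hz : GH * aOS (Finset.Icc 1 bb) (fun _ => 1) χ χ = 0 := by
      rw [hGH, aOS_mul_collapse (fun i hi j hj => hχ i (hIocKP hi) j (h1bKP hj))]
      rw [show Finset.Ioc bb KP ∩ Finset.Icc 1 bb = ∅ by
        ext j; simp only [Finset.mem_inter, Finset.mem_Ioc, Finset.mem_Icc,
          Finset.notMem_empty, iff_false]; omega]
      exact aOS_empty _ _ _
    rw [hz, sub_zero]
  have hΔ : NPᵀ * NP = NTᵀ * NT + (NPᵀ * Dm + Dmᵀ * NT) := by
    rw [hDm, Matrix.transpose_sub, Matrix.mul_sub, Matrix.sub_mul]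
    abel
  set Z := PH * Wm with hZ
  have hZΛ : Z * Λ = GH * Z - PH * ((NPᵀ * Dm + Dmᵀ * NT) * Wm) := by
    calc Z * Λ = PH * (Wm * Λ) := by rw [hZ]; exact Matrix.mul_assoc PH Wm Λ
      _ = PH * ((NTᵀ * NT) * Wm) := by rw [hGTW]
      _ = PH * ((NPᵀ * NP) * Wm) - PH * ((NPᵀ * Dm + Dmᵀ * NT) * Wm) := by
          rw [hΔ]; rw [Matrix.add_mul, Matrix.mul_add]; abel
      _ = GH * Wm - PH * ((NPᵀ * Dm + Dmᵀ * NT) * Wm) := by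
          rw [← Matrix.mul_assoc PH (NPᵀ * NP) Wm, hPHGP]
      _ = GH * Z - PH * ((NPᵀ * Dm + Dmᵀ * NT) * Wm) := by
          rw [hZ, ← Matrix.mul_assoc GH PH Wm, hGHPH]
  have hΛΛI : Λ * ΛI = 1 := by
    rw [hΛ, hΛI]
    rw [collapse_eq' (subset_refl _) (fun i hi j hj => hebON i hi j hj)
      (fun i hi => mul_inv_cancel₀ (pow_ne_zero 2 (ne_of_gt (hσ'pos i hi))))]
    exact (one_eq_aOS AB).symm
  have hZfin : Z = GH * Z * ΛI - PH * ((NPᵀ * Dm + Dmᵀ * NT) * Wm) * ΛI := by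
    calc Z = Z * (Λ * ΛI) := by rw [hΛΛI, Matrix.mul_one]
      _ = (Z * Λ) * ΛI := (Matrix.mul_assoc Z Λ ΛI).symm
      _ = GH * Z * ΛI - PH * ((NPᵀ * Dm + Dmᵀ * NT) * Wm) * ΛI := by
          rw [hZΛ, Matrix.sub_mul]
  have hnPH : opNorm PH ≤ 1 := by
    rw [hPH]; exact opNorm_one_sub_proj _ χ (aON_mono h1bKP hχ)
  have hnGH : opNorm GH ≤ s ^ 2 := by
    rw [hGH]
    apply aOS_opNorm_le _ _ _ _ (aON_mono hIocKP hχ) (aON_mono hIocKP hχ) (sq_nonneg s)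
    intro j hj
    rw [abs_of_nonneg (sq_nonneg _)]
    exact pow_le_pow_left₀ (hτnn j (hIocKP hj)) (hτtail j hj) 2
  have hnΛI : opNorm ΛI ≤ (t ^ 2)⁻¹ := by
    rw [hΛI]
    apply aOS_opNorm_le _ _ _ _ hebON hebON (by positivity)
    intro j hj
    rw [abs_of_nonneg (by positivity)]
    apply inv_anti₀ (by positivity)
    exact pow_le_pow_left₀ (le_of_lt htpos) (hσ't j hj) 2
  have hPHNPt : PH * NPᵀ = aOS (Finset.Ioc bb KP) τ χ φ := by
    rw [hPH, hNP, aOS_transpose, Matrix.sub_mul, Matrix.one_mul]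
    rw [collapse_eq' h1bKP (fun i hi j hj => hχ i (h1bKP hi) j hj) (fun i _ => one_mul _)]
    rw [hKsplit, aOS_union hdisj]
    abel
  have hnPHNPt : opNorm (PH * NPᵀ) ≤ s := by
    rw [hPHNPt]
    apply aOS_opNorm_le _ _ _ _ (aON_mono hIocKP hχ) (aON_mono hIocKP hφ) hs
    intro j hj
    rw [abs_of_nonneg (hτnn j (hIocKP hj))]
    exact hτtail j hj
  have hWΛI : Wm * ΛI = aOS AB (fun j => (σ' j ^ 2)⁻¹) ω (eb AB) := by
    rw [hWm, hΛI]
    exact collapse_eq' (subset_refl _) (fun i hi j hj => hebON i hi j hj)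
      (fun i _ => one_mul _)
  have hnWΛI : opNorm (Wm * ΛI) ≤ (t ^ 2)⁻¹ := by
    rw [hWΛI]
    apply aOS_opNorm_le _ _ _ _ (aON_mono hABK hω) hebON (by positivity)
    intro j hj
    rw [abs_of_nonneg (by positivity)]
    apply inv_anti₀ (by positivity)
    exact pow_le_pow_left₀ (le_of_lt htpos) (hσ't j hj) 2
  have hNTWΛI : NT * (Wm * ΛI) = aOS AB (fun j => (σ' j)⁻¹) ψ (eb AB) := by
    rw [hWΛI, hNT]
    exact collapse_eq hABK (fun i hi j hj => hω i hi j (hABK hj))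
      (fun i hi => mul_sq_inv (σ' i) (ne_of_gt (hσ'pos i hi)))
  have hnNTWΛI : opNorm (NT * (Wm * ΛI)) ≤ t⁻¹ := by
    rw [hNTWΛI]
    apply aOS_opNorm_le _ _ _ _ (aON_mono hABK hψ) hebON (by positivity)
    intro j hj
    rw [abs_of_nonneg (le_of_lt (inv_pos.2 (hσ'pos j hj)))]
    exact inv_anti₀ htpos (hσ't j hj)
  have hnD : opNorm Dm ≤ ε := hD
  have hnDt : opNorm Dmᵀ ≤ ε := le_trans (opNorm_transpose_le _) hD
  have hR : PH * ((NPᵀ * Dm + Dmᵀ * NT) * Wm) * ΛI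
      = (PH * NPᵀ) * (Dm * (Wm * ΛI)) + PH * (Dmᵀ * (NT * (Wm * ΛI))) := by
    simp only [Matrix.add_mul, Matrix.mul_add, Matrix.mul_assoc]
  have hyineq : opNorm Z ≤ s ^ 2 * (t ^ 2)⁻¹ * opNorm Z
      + (s * (ε * (t ^ 2)⁻¹) + 1 * (ε * t⁻¹)) := by
    calc opNorm Z = opNorm (GH * Z * ΛI - PH * ((NPᵀ * Dm + Dmᵀ * NT) * Wm) * ΛI) := by
          rw [← hZfin]
      _ ≤ opNorm (GH * Z * ΛI) + opNorm (PH * ((NPᵀ * Dm + Dmᵀ * NT) * Wm) * ΛI) :=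
          opNorm_sub_le _ _
      _ ≤ s ^ 2 * opNorm Z * (t ^ 2)⁻¹
          + (s * (ε * (t ^ 2)⁻¹) + 1 * (ε * t⁻¹)) := by
          apply add_le_add
          · exact opNorm_mul_bound (opNorm_mul_bound hnGH (le_refl _)) hnΛI
          · rw [hR]
            apply le_trans (opNorm_add_le _ _)
            apply add_le_add
            · exact opNorm_mul_bound hnPHNPt (opNorm_mul_bound hnD hnWΛI)
            · exact opNorm_mul_bound hnPH (opNorm_mul_bound hnDt hnNTWΛI)
      _ = s ^ 2 * (t ^ 2)⁻¹ * opNorm Z + (s * (ε * (t ^ 2)⁻¹) + 1 * (ε * t⁻¹)) := by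
          ring
  exact oneshot (opNorm_nonneg _) hε hs hst hyineq (le_refl _)

/-- generic "high part" sin-theta bound via one-shot Sylvester argument -/
lemma sylv_high (NP NT : Matrix γ α ℝ) (KP KT aa bb : ℕ)
    (τ σ' : ℕ → ℝ) (φ : ℕ → γ → ℝ) (χ : ℕ → α → ℝ) (ψ : ℕ → γ → ℝ) (ω : ℕ → α → ℝ)
    (AB : Finset ℕ) (hABeq : AB = Finset.Icc aa bb) (ε s t : ℝ)
    (haa : 1 ≤ aa) (hab : aa ≤ bb) (hbT : bb ≤ KT) (haP : aa - 1 ≤ KP)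
    (hφ : aON (Finset.Icc 1 KP) φ) (hχ : aON (Finset.Icc 1 KP) χ)
    (hψ : aON (Finset.Icc 1 KT) ψ) (hω : aON (Finset.Icc 1 KT) ω)
    (hNP : NP = aOS (Finset.Icc 1 KP) τ φ χ) (hNT : NT = aOS (Finset.Icc 1 KT) σ' ψ ω)
    (hD : opNorm (NP - NT) ≤ ε) (hε : 0 ≤ ε)
    (hs : 0 ≤ s) (hst : s < t)
    (hτlow : ∀ j ∈ Finset.Icc 1 (aa-1), t ≤ τ j)
    (hσ's : ∀ j ∈ AB, σ' j ≤ s) (hσ'nn : ∀ j ∈ AB, 0 ≤ σ' j) :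
    opNorm (aOS (Finset.Icc 1 (aa-1)) (fun _ => 1) χ χ * aOS AB (fun _ => 1) ω (eb AB))
      ≤ ε / (t - s) := by
  classical
  have htpos : 0 < t := lt_of_le_of_lt hs hst
  have hABK : AB ⊆ Finset.Icc 1 KT := by rw [hABeq]; exact Finset.Icc_subset_Icc haa hbT
  have hLKP : Finset.Icc 1 (aa-1) ⊆ Finset.Icc 1 KP := Finset.Icc_subset_Icc le_rfl haP
  have hτpos : ∀ j ∈ Finset.Icc 1 (aa-1), 0 < τ j :=
    fun j hj => lt_of_lt_of_le htpos (hτlow j hj)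
  have hebON := eb_on AB
  set PL := aOS (Finset.Icc 1 (aa-1)) (fun _ => 1) χ χ with hPL
  set Wm := aOS AB (fun _ => 1) ω (eb AB) with hWm
  set Λ := aOS AB (fun j => σ' j ^ 2) (eb AB) (eb AB) with hΛ
  set Q := aOS (Finset.Icc 1 (aa-1)) (fun j => (τ j ^ 2)⁻¹) χ χ with hQ
  set Dm := NP - NT with hDm
  have hGP : NPᵀ * NP = aOS (Finset.Icc 1 KP) (fun j => τ j ^ 2) χ χ := by
    rw [hNP, aOS_transpose]
    exact collapse_eq (subset_refl _) hφ (fun i _ => (sq (τ i)).symm)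
  have hGTW : (NTᵀ * NT) * Wm = Wm * Λ := by
    have e1 : NTᵀ * NT = aOS (Finset.Icc 1 KT) (fun j => σ' j ^ 2) ω ω := by
      rw [hNT, aOS_transpose]
      exact collapse_eq (subset_refl _) hψ (fun i _ => (sq (σ' i)).symm)
    rw [e1, hWm, hΛ]
    rw [collapse_eq hABK (fun i hi j hj => hω i hi j (hABK hj)) (fun i _ => mul_one _)]
    rw [collapse_eq' (subset_refl _) (fun i hi j hj => hebON i hi j hj)
      (fun i _ => one_mul _)]
  have hQGP : Q * (NPᵀ * NP) = PL := by
    rw [hQ, hGP, hPL]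
    exact collapse_eq' hLKP (fun i hi j hj => hχ i (hLKP hi) j hj)
      (fun i hi => inv_mul_cancel₀ (pow_ne_zero 2 (ne_of_gt (hτpos i hi))))
  have hQPL : Q * PL = Q := by
    rw [hQ, hPL]
    exact collapse_eq' (subset_refl _)
      (fun i hi j hj => (aON_mono hLKP hχ) i hi j hj) (fun i _ => mul_one _)
  have hΔ : NPᵀ * NP = NTᵀ * NT + (NPᵀ * Dm + Dmᵀ * NT) := by
    rw [hDm, Matrix.transpose_sub, Matrix.mul_sub, Matrix.sub_mul]
    abel
  set Z := PL * Wm with hZ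
  have hZid : Z = Q * Z * Λ + Q * ((NPᵀ * Dm + Dmᵀ * NT) * Wm) := by
    calc Z = (Q * (NPᵀ * NP)) * Wm := by rw [hQGP]
      _ = Q * ((NPᵀ * NP) * Wm) := Matrix.mul_assoc Q (NPᵀ * NP) Wm
      _ = Q * ((NTᵀ * NT) * Wm) + Q * ((NPᵀ * Dm + Dmᵀ * NT) * Wm) := by
          rw [hΔ, Matrix.add_mul, Matrix.mul_add]
      _ = Q * (Wm * Λ) + Q * ((NPᵀ * Dm + Dmᵀ * NT) * Wm) := by rw [hGTW]
      _ = (Q * Wm) * Λ + Q * ((NPᵀ * Dm + Dmᵀ * NT) * Wm) := by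
          rw [← Matrix.mul_assoc Q Wm Λ]
      _ = Q * Z * Λ + Q * ((NPᵀ * Dm + Dmᵀ * NT) * Wm) := by
          rw [show Q * Wm = Q * Z from by rw [hZ, ← Matrix.mul_assoc, hQPL]]
  have hnQ : opNorm Q ≤ (t ^ 2)⁻¹ := by
    rw [hQ]
    apply aOS_opNorm_le _ _ _ _ (aON_mono hLKP hχ) (aON_mono hLKP hχ) (by positivity)
    intro j hj
    rw [abs_of_nonneg (by positivity)]
    apply inv_anti₀ (by positivity)
    exact pow_le_pow_left₀ (le_of_lt htpos) (hτlow j hj) 2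
  have hnΛ : opNorm Λ ≤ s ^ 2 := by
    rw [hΛ]
    apply aOS_opNorm_le _ _ _ _ hebON hebON (sq_nonneg s)
    intro j hj
    rw [abs_of_nonneg (sq_nonneg _)]
    exact pow_le_pow_left₀ (hσ'nn j hj) (hσ's j hj) 2
  have hnW : opNorm Wm ≤ 1 := by
    rw [hWm]
    exact aOS_opNorm_le _ _ _ _ (aON_mono hABK hω) hebON zero_le_one
      (fun i _ => by norm_num)
  have hQNPt : Q * NPᵀ = aOS (Finset.Icc 1 (aa-1)) (fun j => (τ j)⁻¹) χ φ := by
    rw [hQ, hNP, aOS_transpose]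
    exact collapse_eq' hLKP (fun i hi j hj => hχ i (hLKP hi) j hj)
      (fun i hi => by rw [mul_comm]; exact mul_sq_inv (τ i) (ne_of_gt (hτpos i hi)))
  have hnQNPt : opNorm (Q * NPᵀ) ≤ t⁻¹ := by
    rw [hQNPt]
    apply aOS_opNorm_le _ _ _ _ (aON_mono hLKP hχ) (aON_mono hLKP hφ) (by positivity)
    intro j hj
    rw [abs_of_nonneg (le_of_lt (inv_pos.2 (hτpos j hj)))]
    exact inv_anti₀ htpos (hτlow j hj)
  have hNTW : NT * Wm = aOS AB σ' ψ (eb AB) := by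
    rw [hNT, hWm]
    exact collapse_eq hABK (fun i hi j hj => hω i hi j (hABK hj)) (fun i _ => mul_one _)
  have hnNTW : opNorm (NT * Wm) ≤ s := by
    rw [hNTW]
    apply aOS_opNorm_le _ _ _ _ (aON_mono hABK hψ) hebON hs
    intro j hj
    rw [abs_of_nonneg (hσ'nn j hj)]
    exact hσ's j hj
  have hnD : opNorm Dm ≤ ε := hD
  have hnDt : opNorm Dmᵀ ≤ ε := le_trans (opNorm_transpose_le _) hD
  have hR : Q * ((NPᵀ * Dm + Dmᵀ * NT) * Wm)
      = (Q * NPᵀ) * (Dm * Wm) + Q * (Dmᵀ * (NT * Wm)) := by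
    simp only [Matrix.add_mul, Matrix.mul_add, Matrix.mul_assoc]
  have hyineq : opNorm Z ≤ s ^ 2 * (t ^ 2)⁻¹ * opNorm Z
      + (t⁻¹ * (ε * 1) + (t ^ 2)⁻¹ * (ε * s)) := by
    calc opNorm Z = opNorm (Q * Z * Λ + Q * ((NPᵀ * Dm + Dmᵀ * NT) * Wm)) := by
          rw [← hZid]
      _ ≤ opNorm (Q * Z * Λ) + opNorm (Q * ((NPᵀ * Dm + Dmᵀ * NT) * Wm)) :=
          opNorm_add_le _ _
      _ ≤ (t ^ 2)⁻¹ * opNorm Z * s ^ 2 + (t⁻¹ * (ε * 1) + (t ^ 2)⁻¹ * (ε * s)) := by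
          apply add_le_add
          · exact opNorm_mul_bound (opNorm_mul_bound hnQ (le_refl _)) hnΛ
          · rw [hR]
            apply le_trans (opNorm_add_le _ _)
            apply add_le_add
            · exact opNorm_mul_bound hnQNPt (opNorm_mul_bound hnD hnW)
            · exact opNorm_mul_bound hnQ (opNorm_mul_bound hnDt hnNTW)
      _ = s ^ 2 * (t ^ 2)⁻¹ * opNorm Z + (t⁻¹ * (ε * 1) + (t ^ 2)⁻¹ * (ε * s)) := by
          ring
  exact oneshot (opNorm_nonneg _) hε hs hst hyineq (le_of_eq (by ring))

end Sylvester

end SPRB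

open SPRB

variable (p n k a b : ℕ)
variable (V : Matrix (Fin n) {i // i ∈ Finset.Icc 1 k} ℝ)
variable (Vab Vhatab : Matrix (Fin n) {i // i ∈ Finset.Icc a b} ℝ)
variable (S : Matrix (Fin n) {i // i ∈ Finset.Icc a b} ℝ)
variable (M E : Matrix (Fin p) (Fin n) ℝ)
variable (σ : ℕ → ℝ) (u : ℕ → Fin p → ℝ) (v : ℕ → Fin n → ℝ)

set_option maxHeartbeats 3200000 in
theorem spectral_projector_remainder_bound (hk : k ≤ min p n)
    (hσpos : ∀ i ∈ Finset.Icc 1 k, 0 < σ i)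
    (hσmono : ∀ i ∈ Finset.Icc 1 k, ∀ i' ∈ Finset.Icc 1 k, i ≤ i' → σ i' ≤ σ i)
    (hσtop : σ (k + 1) = 0)
    (hu : ∀ i ∈ Finset.Icc 1 k, ∀ i' ∈ Finset.Icc 1 k,
      ∑ x, u i x * u i' x = if i = i' then (1 : ℝ) else 0)
    (hv : ∀ i ∈ Finset.Icc 1 k, ∀ i' ∈ Finset.Icc 1 k,
      ∑ y, v i y * v i' y = if i = i' then (1 : ℝ) else 0)
    (hM : M = ∑ i ∈ Finset.Icc 1 k, σ i • Matrix.vecMulVec (u i) (v i))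
    -- an SVD of the perturbed matrix M + E
    (σhat : ℕ → ℝ) (uhat : ℕ → Fin p → ℝ) (vhat : ℕ → Fin n → ℝ)
    (hσhatnn : ∀ i ∈ Finset.Icc 1 (min p n), 0 ≤ σhat i)
    (hσhatmono : ∀ i ∈ Finset.Icc 1 (min p n), ∀ i' ∈ Finset.Icc 1 (min p n),
      i ≤ i' → σhat i' ≤ σhat i)
    (huhat : ∀ i ∈ Finset.Icc 1 (min p n), ∀ i' ∈ Finset.Icc 1 (min p n),
      ∑ x, uhat i x * uhat i' x = if i = i' then (1 : ℝ) else 0)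
    (hvhat : ∀ i ∈ Finset.Icc 1 (min p n), ∀ i' ∈ Finset.Icc 1 (min p n),
      ∑ y, vhat i y * vhat i' y = if i = i' then (1 : ℝ) else 0)
    (hMhat : M + E = ∑ i ∈ Finset.Icc 1 (min p n),
      σhat i • Matrix.vecMulVec (uhat i) (vhat i))
    (ha : 1 ≤ a) (hab : a ≤ b) (hbk : b ≤ k)
    -- the singular value gap, with the convention σ₀ = +∞
    (g : ℝ) (hgpos : 0 < g)
    (hg : g = if a = 1 then σ b - σ (b + 1)
              else min (σ (a - 1) - σ a) (σ b - σ (b + 1)))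
    (hV : ∀ x i, V x i = v i.1 x)
    (hVab : ∀ x i, Vab x i = v i.1 x)
    (hVhatab : ∀ x i, Vhatab x i = vhat i.1 x)
    (hS : S = (1 - V * Vᵀ) * (Vhatab * Vhatabᵀ - Vab * Vabᵀ) * Vab
        - ∑ j ∈ Finset.Icc a b,
            (σ j)⁻¹ • ((1 - V * Vᵀ) * Eᵀ * Matrix.vecMulVec (u j) (v j) * Vab)) :
    opNorm S ≤ (32 * (σ a - σ b) / (Real.pi * g) + 16) * opNorm E ^ 2 / g ^ 2 := by
  classical
  have hπ : 0 < Real.pi := Real.pi_pos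
  have hεnn : 0 ≤ opNorm E := opNorm_nonneg E
  set ε := opNorm E with hεdef
  have haK : a ∈ Finset.Icc 1 k := by simp only [Finset.mem_Icc]; omega
  have hbK : b ∈ Finset.Icc 1 k := by simp only [Finset.mem_Icc]; omega
  have haK' : a ∈ Finset.Icc 1 (min p n) := by simp only [Finset.mem_Icc]; omega
  have hbK' : b ∈ Finset.Icc 1 (min p n) := by simp only [Finset.mem_Icc]; omega
  have hABsubK : Finset.Icc a b ⊆ Finset.Icc 1 k := Finset.Icc_subset_Icc ha hbk
  have hKsubK' : Finset.Icc 1 k ⊆ Finset.Icc 1 (min p n) :=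
    Finset.Icc_subset_Icc le_rfl hk
  have hABsubK' : Finset.Icc a b ⊆ Finset.Icc 1 (min p n) :=
    subset_trans hABsubK hKsubK'
  have huON : aON (Finset.Icc 1 k) u := hu
  have hvON : aON (Finset.Icc 1 k) v := hv
  have huhON : aON (Finset.Icc 1 (min p n)) uhat := huhat
  have hvhON : aON (Finset.Icc 1 (min p n)) vhat := hvhat
  have hMos : M = aOS (Finset.Icc 1 k) σ u v := hM
  have hMhos : M + E = aOS (Finset.Icc 1 (min p n)) σhat uhat vhat := hMhat
  have hVos : V = aOS (Finset.Icc 1 k) (fun _ => 1) v (eb (Finset.Icc 1 k)) :=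
    col_eq_aOS V hV
  have hVabos : Vab = aOS (Finset.Icc a b) (fun _ => 1) v (eb (Finset.Icc a b)) :=
    col_eq_aOS Vab hVab
  have hVhos : Vhatab = aOS (Finset.Icc a b) (fun _ => 1) vhat (eb (Finset.Icc a b)) :=
    col_eq_aOS Vhatab hVhatab
  have hσb_pos : 0 < σ b := hσpos b hbK
  have hσa_pos : 0 < σ a := hσpos a haK
  have hσb1_nn : 0 ≤ σ (b + 1) := by
    rcases eq_or_lt_of_le hbk with h | h
    · rw [h, hσtop]
    · exact le_of_lt (hσpos (b+1) (by simp only [Finset.mem_Icc]; omega))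
  have hgapb : g ≤ σ b - σ (b + 1) := by
    rw [hg]; split
    · exact le_rfl
    · exact min_le_right _ _
  have hσbg : g ≤ σ b := by linarith
  have hσab : σ b ≤ σ a := hσmono a haK b hbK hab
  have hVVT : V * Vᵀ = aOS (Finset.Icc 1 k) (fun _ => 1) v v := by
    rw [hVos, aOS_transpose]
    exact collapse_eq (subset_refl _) (fun i hi j hj => eb_on _ i hi j hj)
      (fun i _ => one_mul _)
  have hPVab0 : (1 - V * Vᵀ) * Vab = 0 := by
    rw [hVVT, hVabos]
    exact pkill hvON hABsubK _ _
  have hPMt : (1 - V * Vᵀ) * Mᵀ = 0 := by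
    rw [hVVT, show Mᵀ = aOS (Finset.Icc 1 k) σ v u from by rw [hMos, aOS_transpose]]
    exact pkill hvON (subset_refl _) _ _
  have hsum : (∑ j ∈ Finset.Icc a b,
      (σ j)⁻¹ • ((1 - V * Vᵀ) * Eᵀ * Matrix.vecMulVec (u j) (v j) * Vab))
      = (1 - V * Vᵀ) * Eᵀ * aOS (Finset.Icc a b) (fun j => (σ j)⁻¹) u v * Vab := by
    have e1 : (1 - V * Vᵀ) * Eᵀ
        * (∑ j ∈ Finset.Icc a b, (σ j)⁻¹ • Matrix.vecMulVec (u j) (v j)) * Vab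
        = ∑ j ∈ Finset.Icc a b,
          (σ j)⁻¹ • ((1 - V * Vᵀ) * Eᵀ * Matrix.vecMulVec (u j) (v j) * Vab) := by
      rw [Matrix.mul_sum, Matrix.sum_mul]
      apply Finset.sum_congr rfl; intro j _
      rw [Matrix.mul_smul, Matrix.smul_mul]
    exact e1.symm
  have hnP : opNorm (1 - V * Vᵀ) ≤ 1 := by
    rw [hVVT]; exact opNorm_one_sub_proj _ v hvON
  have hnVab : opNorm Vab ≤ 1 := by
    rw [hVabos]
    exact aOS_opNorm_le _ _ _ _ (aON_mono hABsubK hvON) (eb_on _) zero_le_one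
      (fun i _ => by norm_num)
  have hnVh : opNorm Vhatab ≤ 1 := by
    rw [hVhos]
    exact aOS_opNorm_le _ _ _ _ (aON_mono hABsubK' hvhON) (eb_on _) zero_le_one
      (fun i _ => by norm_num)
  have hnVhT : opNorm Vhatabᵀ ≤ 1 := le_trans (opNorm_transpose_le _) hnVh
  have hnEt : opNorm Eᵀ ≤ ε := opNorm_transpose_le E
  have hnG : opNorm (aOS (Finset.Icc a b) (fun j => (σ j)⁻¹) u v) ≤ (σ b)⁻¹ := by
    apply aOS_opNorm_le _ _ _ _ (aON_mono hABsubK huON) (aON_mono hABsubK hvON)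
      (le_of_lt (inv_pos.2 hσb_pos))
    intro j hj
    have hjK := hABsubK hj
    have h1 : σ b ≤ σ j := hσmono j hjK b hbK (Finset.mem_Icc.1 hj).2
    rw [abs_of_nonneg (le_of_lt (inv_pos.2 (hσpos j hjK)))]
    exact inv_anti₀ hσb_pos h1
  have hgne : g ≠ 0 := ne_of_gt hgpos
  rcases le_or_gt ε (g/3) with hcase | hcase
  · -- small perturbation case
    have hεg : ε < g := by linarith
    have hgε : 0 < g - ε := by linarith
    have hβpos : 0 < σ b - ε := by linarith
    have hEeq : (M + E) - M = E := by abel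
    have hMEeq : M - (M + E) = -E := by abel
    have hW1 : σ b ≤ σhat b + ε := by
      have h := weyl (M+E) M (min p n) k b σhat σ uhat u vhat v (le_trans ha hab) hbk
        (σhat b) (hσhatnn b hbK')
        (fun j hj => hσhatmono b hbK' j
          (by simp only [Finset.mem_Icc] at *; omega)
          (by simp only [Finset.mem_Icc] at hj; exact hj.1))
        hσhatnn (fun j hj => le_of_lt (hσpos j hj)) hσmono
        huhON hvhON huON hvON hMhos hMos
      rw [hMEeq, opNorm_neg] at h
      exact h
    have hW4 : σhat a ≤ σ a + ε := by
      have h := weyl M (M+E) k (min p n) a σ σhat u uhat v vhat ha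
        (le_trans (le_trans hab hbk) hk)
        (σ a) (le_of_lt hσa_pos)
        (fun j hj => hσmono a haK j
          (by simp only [Finset.mem_Icc] at *; omega)
          (by simp only [Finset.mem_Icc] at hj; exact hj.1))
        (fun j hj => le_of_lt (hσpos j hj)) hσhatnn hσhatmono
        huON hvON huhON hvhON hMos hMhos
      rw [hEeq] at h
      exact h
    set sm : ℝ := if b < min p n then σhat (b+1) else 0 with hsmdef
    have hsmnn : 0 ≤ sm := by
      rw [hsmdef]; split
      · next h => exact hσhatnn (b+1) (by simp only [Finset.mem_Icc]; omega)
      · exact le_rfl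
    have hsmle : sm ≤ σ (b+1) + ε := by
      rw [hsmdef]; split
      · next h =>
          have hw := weyl M (M+E) k (min p n) (b+1) σ σhat u uhat v vhat (by omega)
            (by omega) (σ (b+1)) hσb1_nn
            (fun j hj => by
              have hj' := Finset.mem_Icc.1 hj
              exact hσmono (b+1) (by simp only [Finset.mem_Icc]; omega) j
                (by simp only [Finset.mem_Icc]; omega) hj'.1)
            (fun j hj => le_of_lt (hσpos j hj)) hσhatnn hσhatmono
            huON hvON huhON hvhON hMos hMhos
          rw [hEeq] at hw
          exact hw
      · next h => linarith
    have hsmlt : sm < σ b := by linarith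
    have hsmtail : ∀ j ∈ Finset.Ioc b (min p n), σhat j ≤ sm := by
      intro j hj
      have hj' := Finset.mem_Ioc.1 hj
      rw [hsmdef, if_pos (by omega : b < min p n)]
      exact hσhatmono (b+1) (by simp only [Finset.mem_Icc]; omega) j
        (by simp only [Finset.mem_Icc]; omega) (by omega)
    have hσhatAB : ∀ j ∈ Finset.Icc a b, σ b - ε ≤ σhat j := by
      intro j hj
      have hj' := Finset.mem_Icc.1 hj
      have h1 : σhat b ≤ σhat j := hσhatmono j (hABsubK' hj) b hbK' hj'.2
      linarith
    have hσhatABub : ∀ j ∈ Finset.Icc a b, σhat j ≤ σ a + ε := by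
      intro j hj
      have hj' := Finset.mem_Icc.1 hj
      have h1 : σhat j ≤ σhat a := hσhatmono a haK' j (hABsubK' hj) hj'.1
      linarith
    have hσhatABpos : ∀ j ∈ Finset.Icc a b, 0 < σhat j :=
      fun j hj => lt_of_lt_of_le hβpos (hσhatAB j hj)
    have hσABlb : ∀ j ∈ Finset.Icc a b, σ b ≤ σ j :=
      fun j hj => hσmono j (hABsubK hj) b hbK (Finset.mem_Icc.1 hj).2
    have hzL : opNorm ((1 - aOS (Finset.Icc 1 b) (fun _ => 1) vhat vhat)
        * aOS (Finset.Icc a b) (fun _ => 1) v (eb (Finset.Icc a b))) ≤ ε / (g - ε) := by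
      have h := sylv_low (M+E) M (min p n) k a b σhat σ uhat vhat u v
        (Finset.Icc a b) rfl ε sm (σ b) ha hab (le_trans hbk hk) hbk
        huhON hvhON huON hvON hMhos hMos
        (by rw [hEeq]) hεnn hsmnn hsmlt hsmtail hσhatnn hσABlb
      calc opNorm _ ≤ ε / (σ b - sm) := h
        _ ≤ ε / (g - ε) := by
            apply div_le_div_of_nonneg_left hεnn hgε; linarith
    have hyH : opNorm ((1 - aOS (Finset.Icc 1 b) (fun _ => 1) u u)
        * aOS (Finset.Icc a b) (fun _ => 1) uhat (eb (Finset.Icc a b)))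
        ≤ ε / (g - ε) := by
      have hNPt : Mᵀ = aOS (Finset.Icc 1 k) σ v u := by rw [hMos, aOS_transpose]
      have hNTt : (M+E)ᵀ = aOS (Finset.Icc 1 (min p n)) σhat vhat uhat := by
        rw [hMhos, aOS_transpose]
      have hDt : opNorm (Mᵀ - (M+E)ᵀ) ≤ ε := by
        have e : Mᵀ - (M+E)ᵀ = -Eᵀ := by rw [Matrix.transpose_add]; abel
        rw [e, opNorm_neg]; exact hnEt
      have h := sylv_low Mᵀ (M+E)ᵀ k (min p n) a b σ σhat v u vhat uhat
        (Finset.Icc a b) rfl ε (σ (b+1)) (σ b - ε) ha hab hbk (le_trans hbk hk)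
        hvON huON hvhON huhON hNPt hNTt hDt hεnn hσb1_nn
        (by linarith)
        (fun j hj => by
          have hj' := Finset.mem_Ioc.1 hj
          exact hσmono (b+1) (by simp only [Finset.mem_Icc]; omega) j
            (by simp only [Finset.mem_Icc]; omega) (by omega))
        (fun j hj => le_of_lt (hσpos j hj)) hσhatAB
      calc opNorm _ ≤ ε / ((σ b - ε) - σ (b+1)) := h
        _ ≤ ε / (g - ε) := by
            apply div_le_div_of_nonneg_left hεnn hgε; linarith
    have hzH : opNorm (aOS (Finset.Icc 1 (a-1)) (fun _ => 1) vhat vhat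
        * aOS (Finset.Icc a b) (fun _ => 1) v (eb (Finset.Icc a b)))
        ≤ ε / (g - ε) := by
      by_cases ha1 : a = 1
      · rw [show Finset.Icc 1 (a-1) = (∅ : Finset ℕ) from by
          rw [ha1]; exact Finset.Icc_eq_empty (by norm_num)]
        rw [aOS_empty, Matrix.zero_mul, opNorm_zero]
        positivity
      · have ha2 : 2 ≤ a := by omega
        have haK1 : a - 1 ∈ Finset.Icc 1 k := by simp only [Finset.mem_Icc]; omega
        have haK1' : a - 1 ∈ Finset.Icc 1 (min p n) := by
          simp only [Finset.mem_Icc]; omega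
        have hgapa : g ≤ σ (a-1) - σ a := by
          rw [hg, if_neg ha1]; exact min_le_left _ _
        have hW3 : σ (a-1) ≤ σhat (a-1) + ε := by
          have h := weyl (M+E) M (min p n) k (a-1) σhat σ uhat u vhat v (by omega)
            (by omega) (σhat (a-1)) (hσhatnn _ haK1')
            (fun j hj => hσhatmono (a-1) haK1' j
              (by simp only [Finset.mem_Icc] at *; omega)
              (by simp only [Finset.mem_Icc] at hj; exact hj.1))
            hσhatnn (fun j hj => le_of_lt (hσpos j hj)) hσmono
            huhON hvhON huON hvON hMhos hMos
          rw [hMEeq, opNorm_neg] at h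
          exact h
        have hτlow : ∀ j ∈ Finset.Icc 1 (a-1), σ (a-1) - ε ≤ σhat j := by
          intro j hj
          have hj' := Finset.mem_Icc.1 hj
          have h1 : σhat (a-1) ≤ σhat j := hσhatmono j
            (by simp only [Finset.mem_Icc]; omega) (a-1) haK1' hj'.2
          linarith
        have h := sylv_high (M+E) M (min p n) k a b σhat σ uhat vhat u v
          (Finset.Icc a b) rfl ε (σ a) (σ (a-1) - ε) ha hab hbk (by omega)
          huhON hvhON huON hvON hMhos hMos (by rw [hEeq]) hεnn
          (le_of_lt hσa_pos) (by linarith) hτlow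
          (fun j hj => hσmono a haK j (hABsubK hj) (Finset.mem_Icc.1 hj).1)
          (fun j hj => le_of_lt (hσpos j (hABsubK hj)))
        calc opNorm _ ≤ ε / ((σ (a-1) - ε) - σ a) := h
          _ ≤ ε / (g - ε) := by
              apply div_le_div_of_nonneg_left hεnn hgε; linarith
    have hyL : opNorm (aOS (Finset.Icc 1 (a-1)) (fun _ => 1) u u
        * aOS (Finset.Icc a b) (fun _ => 1) uhat (eb (Finset.Icc a b)))
        ≤ ε / (g - ε) := by
      by_cases ha1 : a = 1
      · rw [show Finset.Icc 1 (a-1) = (∅ : Finset ℕ) from by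
          rw [ha1]; exact Finset.Icc_eq_empty (by norm_num)]
        rw [aOS_empty, Matrix.zero_mul, opNorm_zero]
        positivity
      · have ha2 : 2 ≤ a := by omega
        have haK1 : a - 1 ∈ Finset.Icc 1 k := by simp only [Finset.mem_Icc]; omega
        have hgapa : g ≤ σ (a-1) - σ a := by
          rw [hg, if_neg ha1]; exact min_le_left _ _
        have hNPt : Mᵀ = aOS (Finset.Icc 1 k) σ v u := by rw [hMos, aOS_transpose]
        have hNTt : (M+E)ᵀ = aOS (Finset.Icc 1 (min p n)) σhat vhat uhat := by
          rw [hMhos, aOS_transpose]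
        have hDt : opNorm (Mᵀ - (M+E)ᵀ) ≤ ε := by
          have e : Mᵀ - (M+E)ᵀ = -Eᵀ := by rw [Matrix.transpose_add]; abel
          rw [e, opNorm_neg]; exact hnEt
        have hτlow : ∀ j ∈ Finset.Icc 1 (a-1), σ (a-1) ≤ σ j := by
          intro j hj
          have hj' := Finset.mem_Icc.1 hj
          exact hσmono j (by simp only [Finset.mem_Icc]; omega) (a-1) haK1 hj'.2
        have h := sylv_high Mᵀ (M+E)ᵀ k (min p n) a b σ σhat v u vhat uhat
          (Finset.Icc a b) rfl ε (σ a + ε) (σ (a-1)) ha hab (le_trans hbk hk)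
          (by omega)
          hvON huON hvhON huhON hNPt hNTt hDt hεnn
          (by linarith) (by linarith) hτlow
          hσhatABub (fun j hj => hσhatnn j (hABsubK' hj))
        calc opNorm _ ≤ ε / (σ (a-1) - (σ a + ε)) := h
          _ ≤ ε / (g - ε) := by
              apply div_le_div_of_nonneg_left hεnn hgε; linarith
    -- decomposition
    have hFUF : aOS (Finset.Icc a b) (fun j => (σhat j)⁻¹) uhat vhat
        = aOS (Finset.Icc a b) (fun _ => 1) uhat (eb (Finset.Icc a b))
          * aOS (Finset.Icc a b) (fun j => (σhat j)⁻¹) (eb (Finset.Icc a b)) vhat :=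
      (collapse_eq' (subset_refl _) (fun i hi j hj => eb_on _ i hi j hj)
        (fun i _ => one_mul _)).symm
    have hnFr : opNorm (aOS (Finset.Icc a b) (fun j => (σhat j)⁻¹)
        (eb (Finset.Icc a b)) vhat) ≤ (σ b - ε)⁻¹ := by
      apply aOS_opNorm_le _ _ _ _ (eb_on _) (aON_mono hABsubK' hvhON)
        (le_of_lt (inv_pos.2 hβpos))
      intro j hj
      rw [abs_of_nonneg (le_of_lt (inv_pos.2 (hσhatABpos j hj)))]
      exact inv_anti₀ hβpos (hσhatAB j hj)
    have hnFm : opNorm (aOS (Finset.Icc a b) (fun j => (σhat j)⁻¹) uhat vhat)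
        ≤ (σ b - ε)⁻¹ := by
      apply aOS_opNorm_le _ _ _ _ (aON_mono hABsubK' huhON) (aON_mono hABsubK' hvhON)
        (le_of_lt (inv_pos.2 hβpos))
      intro j hj
      rw [abs_of_nonneg (le_of_lt (inv_pos.2 (hσhatABpos j hj)))]
      exact inv_anti₀ hβpos (hσhatAB j hj)
    have hVhat_MF : Vhatab = (M + E)ᵀ
        * aOS (Finset.Icc a b) (fun j => (σhat j)⁻¹) uhat (eb (Finset.Icc a b)) := by
      rw [show (M+E)ᵀ = aOS (Finset.Icc 1 (min p n)) σhat vhat uhat from by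
        rw [hMhos, aOS_transpose]]
      rw [collapse_eq hABsubK' (fun i hi j hj => huhON i hi j (hABsubK' hj))
        (fun i hi => mul_inv_cancel₀ (ne_of_gt (hσhatABpos i hi)))]
      exact hVhos
    have hPVhat : (1 - V * Vᵀ) * Vhatab = (1 - V * Vᵀ) * Eᵀ
        * aOS (Finset.Icc a b) (fun j => (σhat j)⁻¹) uhat (eb (Finset.Icc a b)) := by
      rw [hVhat_MF, Matrix.transpose_add, Matrix.add_mul, Matrix.mul_add]
      rw [← Matrix.mul_assoc (1 - V*Vᵀ) Mᵀ _, hPMt, Matrix.zero_mul, zero_add,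
        ← Matrix.mul_assoc]
    have hF'VhT : aOS (Finset.Icc a b) (fun j => (σhat j)⁻¹) uhat (eb (Finset.Icc a b))
        * Vhatabᵀ = aOS (Finset.Icc a b) (fun j => (σhat j)⁻¹) uhat vhat := by
      rw [hVhos, aOS_transpose]
      exact collapse_eq' (subset_refl _) (fun i hi j hj => eb_on _ i hi j hj)
        (fun i _ => mul_one _)
    have hclaim1 : S = (1 - V*Vᵀ) * Eᵀ
        * ((aOS (Finset.Icc a b) (fun j => (σhat j)⁻¹) uhat vhat
          - aOS (Finset.Icc a b) (fun j => (σ j)⁻¹) u v) * Vab) := by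
      rw [hS, hsum]
      have h0 : (1 - V*Vᵀ) * (Vab * Vabᵀ) * Vab = 0 := by
        rw [← Matrix.mul_assoc (1 - V*Vᵀ) Vab Vabᵀ, hPVab0, Matrix.zero_mul,
          Matrix.zero_mul]
      have h1 : (1 - V*Vᵀ) * (Vhatab * Vhatabᵀ - Vab * Vabᵀ) * Vab
          = (1 - V*Vᵀ) * Eᵀ
            * (aOS (Finset.Icc a b) (fun j => (σhat j)⁻¹) uhat vhat * Vab) := by
        rw [Matrix.mul_sub, Matrix.sub_mul, h0, sub_zero]
        rw [← Matrix.mul_assoc (1 - V*Vᵀ) Vhatab Vhatabᵀ]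
        rw [hPVhat]
        rw [Matrix.mul_assoc ((1 - V*Vᵀ) * Eᵀ)
          (aOS (Finset.Icc a b) (fun j => (σhat j)⁻¹) uhat (eb (Finset.Icc a b)))
          Vhatabᵀ, hF'VhT,
          Matrix.mul_assoc ((1 - V*Vᵀ) * Eᵀ)
          (aOS (Finset.Icc a b) (fun j => (σhat j)⁻¹) uhat vhat) Vab]
      rw [h1, Matrix.mul_assoc ((1 - V*Vᵀ) * Eᵀ)
        (aOS (Finset.Icc a b) (fun j => (σ j)⁻¹) u v) Vab]
      rw [Matrix.sub_mul (aOS (Finset.Icc a b) (fun j => (σhat j)⁻¹) uhat vhat)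
        (aOS (Finset.Icc a b) (fun j => (σ j)⁻¹) u v) Vab,
        Matrix.mul_sub ((1 - V*Vᵀ) * Eᵀ)
        (aOS (Finset.Icc a b) (fun j => (σhat j)⁻¹) uhat vhat * Vab)
        (aOS (Finset.Icc a b) (fun j => (σ j)⁻¹) u v * Vab)]
    have hPuF : aOS (Finset.Icc a b) (fun j => (σ j)⁻¹) u v * Mᵀ
        = aOS (Finset.Icc a b) (fun _ => 1) u u := by
      rw [show Mᵀ = aOS (Finset.Icc 1 k) σ v u from by rw [hMos, aOS_transpose]]
      exact collapse_eq' hABsubK (fun i hi j hj => hv i (hABsubK hi) j hj)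
        (fun i hi => inv_mul_cancel₀ (ne_of_gt (hσpos i (hABsubK hi))))
    have hPvF : (M+E)ᵀ * aOS (Finset.Icc a b) (fun j => (σhat j)⁻¹) uhat vhat
        = aOS (Finset.Icc a b) (fun _ => 1) vhat vhat := by
      rw [show (M+E)ᵀ = aOS (Finset.Icc 1 (min p n)) σhat vhat uhat from by
        rw [hMhos, aOS_transpose]]
      exact collapse_eq hABsubK' (fun i hi j hj => huhON i hi j (hABsubK' hj))
        (fun i hi => mul_inv_cancel₀ (ne_of_gt (hσhatABpos i hi)))
    have hclaim2 : aOS (Finset.Icc a b) (fun j => (σhat j)⁻¹) uhat vhat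
        - aOS (Finset.Icc a b) (fun j => (σ j)⁻¹) u v
        = (1 - aOS (Finset.Icc a b) (fun _ => 1) u u)
            * aOS (Finset.Icc a b) (fun j => (σhat j)⁻¹) uhat vhat
          + aOS (Finset.Icc a b) (fun j => (σ j)⁻¹) u v
            * (aOS (Finset.Icc a b) (fun _ => 1) vhat vhat - 1)
          - aOS (Finset.Icc a b) (fun j => (σ j)⁻¹) u v
            * (Eᵀ * aOS (Finset.Icc a b) (fun j => (σhat j)⁻¹) uhat vhat) := by
      rw [← hPuF, ← hPvF, Matrix.transpose_add]
      simp only [Matrix.sub_mul, Matrix.mul_sub, Matrix.one_mul, Matrix.mul_one,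
        Matrix.add_mul, Matrix.mul_add, Matrix.mul_assoc]
      abel
    have ht1 : opNorm ((1 - aOS (Finset.Icc a b) (fun _ => 1) u u)
        * aOS (Finset.Icc a b) (fun j => (σhat j)⁻¹) uhat vhat)
        ≤ (ε/(g-ε) + ε/(g-ε)) * (σ b - ε)⁻¹ := by
      rw [hFUF, ← Matrix.mul_assoc]
      apply opNorm_mul_bound _ hnFr
      have hunion : Finset.Icc 1 b = Finset.Icc 1 (a-1) ∪ Finset.Icc a b := by
        ext j; simp only [Finset.mem_Icc, Finset.mem_union]; omega
      have hdj : Disjoint (Finset.Icc 1 (a-1)) (Finset.Icc a b) := by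
        rw [Finset.disjoint_left]; intro j h1 h2
        simp only [Finset.mem_Icc] at *; omega
      have hsplitu : (1 : Matrix (Fin p) (Fin p) ℝ)
          - aOS (Finset.Icc a b) (fun _ => 1) u u
          = aOS (Finset.Icc 1 (a-1)) (fun _ => 1) u u
            + (1 - aOS (Finset.Icc 1 b) (fun _ => 1) u u) := by
        rw [show aOS (Finset.Icc 1 b) (fun _ => (1:ℝ)) u u
            = aOS (Finset.Icc 1 (a-1)) (fun _ => 1) u u
              + aOS (Finset.Icc a b) (fun _ => 1) u u from by
          rw [hunion, aOS_union hdj]]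
        abel
      rw [hsplitu, Matrix.add_mul]
      exact le_trans (opNorm_add_le _ _) (add_le_add hyL hyH)
    have hGmT : (aOS (Finset.Icc a b) (fun j => (σ j)⁻¹) u v)ᵀ
        = aOS (Finset.Icc a b) (fun _ => 1) v (eb (Finset.Icc a b))
          * aOS (Finset.Icc a b) (fun j => (σ j)⁻¹) (eb (Finset.Icc a b)) u := by
      rw [aOS_transpose]
      exact (collapse_eq' (subset_refl _) (fun i hi j hj => eb_on _ i hi j hj)
        (fun i _ => one_mul _)).symm
    have hnGr : opNorm (aOS (Finset.Icc a b) (fun j => (σ j)⁻¹)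
        (eb (Finset.Icc a b)) u) ≤ (σ b)⁻¹ := by
      apply aOS_opNorm_le _ _ _ _ (eb_on _) (aON_mono hABsubK huON)
        (le_of_lt (inv_pos.2 hσb_pos))
      intro j hj
      rw [abs_of_nonneg (le_of_lt (inv_pos.2 (hσpos j (hABsubK hj))))]
      exact inv_anti₀ hσb_pos (hσABlb j hj)
    have ht2 : opNorm (aOS (Finset.Icc a b) (fun j => (σ j)⁻¹) u v
        * (aOS (Finset.Icc a b) (fun _ => 1) vhat vhat - 1))
        ≤ (ε/(g-ε) + ε/(g-ε)) * (σ b)⁻¹ := by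
      have et : aOS (Finset.Icc a b) (fun j => (σ j)⁻¹) u v
          * (aOS (Finset.Icc a b) (fun _ => 1) vhat vhat - 1)
          = ((aOS (Finset.Icc a b) (fun _ => 1) vhat vhat - 1)
            * (aOS (Finset.Icc a b) (fun j => (σ j)⁻¹) u v)ᵀ)ᵀ := by
        rw [Matrix.transpose_mul, Matrix.transpose_transpose, Matrix.transpose_sub,
          aOS_transpose, Matrix.transpose_one]
      rw [et]
      apply le_trans (opNorm_transpose_le _)
      rw [hGmT, ← Matrix.mul_assoc]
      apply opNorm_mul_bound _ hnGr
      have hneg : (aOS (Finset.Icc a b) (fun _ => 1) vhat vhat - 1)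
          * aOS (Finset.Icc a b) (fun _ => 1) v (eb (Finset.Icc a b))
          = -((1 - aOS (Finset.Icc a b) (fun _ => 1) vhat vhat)
            * aOS (Finset.Icc a b) (fun _ => 1) v (eb (Finset.Icc a b))) := by
        rw [← Matrix.neg_mul, neg_sub]
      rw [hneg, opNorm_neg]
      have hunion : Finset.Icc 1 b = Finset.Icc 1 (a-1) ∪ Finset.Icc a b := by
        ext j; simp only [Finset.mem_Icc, Finset.mem_union]; omega
      have hdj : Disjoint (Finset.Icc 1 (a-1)) (Finset.Icc a b) := by
        rw [Finset.disjoint_left]; intro j h1 h2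
        simp only [Finset.mem_Icc] at *; omega
      have hsplitv : (1 : Matrix (Fin n) (Fin n) ℝ)
          - aOS (Finset.Icc a b) (fun _ => 1) vhat vhat
          = aOS (Finset.Icc 1 (a-1)) (fun _ => 1) vhat vhat
            + (1 - aOS (Finset.Icc 1 b) (fun _ => 1) vhat vhat) := by
        rw [show aOS (Finset.Icc 1 b) (fun _ => (1:ℝ)) vhat vhat
            = aOS (Finset.Icc 1 (a-1)) (fun _ => 1) vhat vhat
              + aOS (Finset.Icc a b) (fun _ => 1) vhat vhat from by
          rw [hunion, aOS_union hdj]]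
        abel
      rw [hsplitv, Matrix.add_mul]
      exact le_trans (opNorm_add_le _ _) (add_le_add hzH hzL)
    have ht3 : opNorm (aOS (Finset.Icc a b) (fun j => (σ j)⁻¹) u v
        * (Eᵀ * aOS (Finset.Icc a b) (fun j => (σhat j)⁻¹) uhat vhat))
        ≤ (σ b)⁻¹ * (ε * (σ b - ε)⁻¹) :=
      opNorm_mul_bound hnG (opNorm_mul_bound hnEt hnFm)
    have hFG : opNorm (aOS (Finset.Icc a b) (fun j => (σhat j)⁻¹) uhat vhat
        - aOS (Finset.Icc a b) (fun j => (σ j)⁻¹) u v)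
        ≤ (ε/(g-ε) + ε/(g-ε)) * (σ b - ε)⁻¹ + (ε/(g-ε) + ε/(g-ε)) * (σ b)⁻¹
          + (σ b)⁻¹ * (ε * (σ b - ε)⁻¹) := by
      rw [hclaim2]
      exact le_trans (opNorm_sub_le _ _)
        (add_le_add (le_trans (opNorm_add_le _ _) (add_le_add ht1 ht2)) ht3)
    have hnS : opNorm S ≤ (1 * ε) * (((ε/(g-ε) + ε/(g-ε)) * (σ b - ε)⁻¹
        + (ε/(g-ε) + ε/(g-ε)) * (σ b)⁻¹ + (σ b)⁻¹ * (ε * (σ b - ε)⁻¹)) * 1) := by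
      rw [hclaim1]
      exact opNorm_mul_bound (opNorm_mul_bound hnP hnEt) (opNorm_mul_bound hFG hnVab)
    have hc1 : ε/(g-ε) ≤ ε * ((2/3)*g)⁻¹ := by
      rw [div_eq_mul_inv]
      apply mul_le_mul_of_nonneg_left _ hεnn
      apply inv_anti₀ (by positivity)
      linarith
    have hc2 : (σ b - ε)⁻¹ ≤ ((2/3)*g)⁻¹ := by
      apply inv_anti₀ (by positivity); linarith
    have hc3 : (σ b)⁻¹ ≤ g⁻¹ := inv_anti₀ hgpos hσbg
    have hw : 0 ≤ ε/(g-ε) := div_nonneg hεnn (le_of_lt hgε)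
    have hfinal : (1 * ε) * (((ε/(g-ε) + ε/(g-ε)) * (σ b - ε)⁻¹
        + (ε/(g-ε) + ε/(g-ε)) * (σ b)⁻¹ + (σ b)⁻¹ * (ε * (σ b - ε)⁻¹)) * 1)
        ≤ 9 * ε^2 / g^2 := by
      have hstep : (1 * ε) * (((ε/(g-ε) + ε/(g-ε)) * (σ b - ε)⁻¹
          + (ε/(g-ε) + ε/(g-ε)) * (σ b)⁻¹ + (σ b)⁻¹ * (ε * (σ b - ε)⁻¹)) * 1)
          ≤ (1 * ε) * (((ε * ((2/3)*g)⁻¹ + ε * ((2/3)*g)⁻¹) * ((2/3)*g)⁻¹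
          + (ε * ((2/3)*g)⁻¹ + ε * ((2/3)*g)⁻¹) * g⁻¹
          + g⁻¹ * (ε * ((2/3)*g)⁻¹)) * 1) := by
        gcongr <;> first
          | exact hc1 | exact hc2 | exact hc3 | positivity
      have heq : (1 * ε) * (((ε * ((2/3)*g)⁻¹ + ε * ((2/3)*g)⁻¹) * ((2/3)*g)⁻¹
          + (ε * ((2/3)*g)⁻¹ + ε * ((2/3)*g)⁻¹) * g⁻¹
          + g⁻¹ * (ε * ((2/3)*g)⁻¹)) * 1) = 9 * ε^2 / g^2 := by
        field_simp
        ring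
      linarith [hstep, le_of_eq heq]
    have hRHS : 9 * ε^2 / g^2
        ≤ (32 * (σ a - σ b) / (Real.pi * g) + 16) * ε ^ 2 / g ^ 2 := by
      have h2 : (9:ℝ) * ε^2 ≤ (32 * (σ a - σ b) / (Real.pi * g) + 16) * ε^2 := by
        apply mul_le_mul_of_nonneg_right _ (sq_nonneg ε)
        have hnum : (0:ℝ) ≤ 32 * (σ a - σ b) / (Real.pi * g) := by
          apply div_nonneg (by linarith) (by positivity)
        linarith
      exact (div_le_div_iff_of_pos_right (by positivity)).mpr h2
    calc opNorm S ≤ _ := hnS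
      _ ≤ 9 * ε^2 / g^2 := hfinal
      _ ≤ _ := hRHS
  · -- large perturbation case
    have hSsplit : S = (1 - V*Vᵀ) * Vhatab * (Vhatabᵀ * Vab)
        - (1 - V*Vᵀ) * Eᵀ * aOS (Finset.Icc a b) (fun j => (σ j)⁻¹) u v * Vab := by
      rw [hS, hsum]
      congr 1
      rw [Matrix.mul_sub, Matrix.sub_mul]
      rw [show (1 - V*Vᵀ) * (Vab * Vabᵀ) * Vab = 0 from by
        rw [← Matrix.mul_assoc (1 - V*Vᵀ) Vab Vabᵀ, hPVab0, Matrix.zero_mul,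
          Matrix.zero_mul], sub_zero]
      rw [← Matrix.mul_assoc (1 - V*Vᵀ) Vhatab Vhatabᵀ,
        Matrix.mul_assoc ((1 - V*Vᵀ) * Vhatab) Vhatabᵀ Vab]
    have hb1 : opNorm ((1 - V*Vᵀ) * Vhatab * (Vhatabᵀ * Vab)) ≤ (1*1)*(1*1) :=
      opNorm_mul_bound (opNorm_mul_bound hnP hnVh) (opNorm_mul_bound hnVhT hnVab)
    have hb2 : opNorm ((1 - V*Vᵀ) * Eᵀ
        * aOS (Finset.Icc a b) (fun j => (σ j)⁻¹) u v * Vab) ≤ ((1*ε)*(σ b)⁻¹)*1 :=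
      opNorm_mul_bound (opNorm_mul_bound (opNorm_mul_bound hnP hnEt) hnG) hnVab
    have hS2 : opNorm S ≤ 1 + ε * g⁻¹ := by
      rw [hSsplit]
      have h3 : (σ b)⁻¹ ≤ g⁻¹ := inv_anti₀ hgpos hσbg
      calc opNorm _ ≤ opNorm ((1 - V*Vᵀ) * Vhatab * (Vhatabᵀ * Vab))
            + opNorm ((1 - V*Vᵀ) * Eᵀ
              * aOS (Finset.Icc a b) (fun j => (σ j)⁻¹) u v * Vab) :=
          opNorm_sub_le _ _
        _ ≤ (1*1)*(1*1) + ((1*ε)*(σ b)⁻¹)*1 := add_le_add hb1 hb2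
        _ ≤ 1 + ε * g⁻¹ := by
            have h4 : ((1*ε)*(σ b)⁻¹)*1 ≤ ε * g⁻¹ := by
              rw [one_mul, mul_one]; exact mul_le_mul_of_nonneg_left h3 hεnn
            linarith
    have hg2 : (0:ℝ) < g^2 := by positivity
    have hpoly : g^2 + ε*g ≤ 16*ε^2 := by
      nlinarith [mul_nonneg (by linarith : (0:ℝ) ≤ ε - g/3)
        (by linarith : (0:ℝ) ≤ 16*ε + 13*g/3)]
    have hkey : 1 + ε * g⁻¹ ≤ 16 * ε^2 / g^2 := by
      calc 1 + ε*g⁻¹ = (g^2 + ε*g)/g^2 := by field_simp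
        _ ≤ 16*ε^2/g^2 := (div_le_div_iff_of_pos_right hg2).mpr hpoly
    have hRHS : 16 * ε^2 / g^2
        ≤ (32 * (σ a - σ b) / (Real.pi * g) + 16) * ε ^ 2 / g ^ 2 := by
      have h2 : (16:ℝ) * ε^2 ≤ (32 * (σ a - σ b) / (Real.pi * g) + 16) * ε^2 := by
        apply mul_le_mul_of_nonneg_right _ (sq_nonneg ε)
        have hnum : (0:ℝ) ≤ 32 * (σ a - σ b) / (Real.pi * g) := by
          apply div_nonneg (by linarith) (by positivity)
        linarith
      exact (div_le_div_iff_of_pos_right (by positivity)).mpr h2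
    calc opNorm S ≤ 1 + ε * g⁻¹ := hS2
      _ ≤ 16 * ε^2/g^2 := hkey
      _ ≤ _ := hRHS
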